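/- arXiv:2407.21555 — 6 statements merged into one kernel-verified Lean document; each statement's English description precedes it below -/
import Mathlib

section
/- Assume A_{II} = 0 for all I ∈ V (simple graph). Fix J₀ ∈ V, an integer r > N, and a ∈ ℚ_p with B' = {x : |x−a|_p ≤ p^{-r}} ⊆ B_{J₀}, and let f = 1_{B'} be the indicator function of B'. Then for every x₀ ∈ B_{J₀} \ B': the integral operator ℒ with kernel L(x,y) = p^N Σ_{I,J∈V}(A_{IJ} − γ_I δ_{IJ}) 1_{B_I}(x) 1_{B_J}(y) satisfies ℒf(x₀) = −p^{N−r} γ_{J₀}, whereas the Zúñiga Laplacian satisfies 𝕃f(x₀) = 0. In particular ℒ ≠ 𝕃. -/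
open MeasureTheory Set
open scoped ENNReal NNReal

noncomputable section

/-- The closed ball `{x : ℚ_p | |x - I|_p ≤ p^(-N)}`. -/
def pBall (p : ℕ) [Fact p.Prime] (N : ℤ) (I : ℚ_[p]) : Set ℚ_[p] :=
  {x : ℚ_[p] | ‖x - I‖ ≤ (p : ℝ) ^ (-N)}

/-- The indicator function of the ball `pBall p N I`, as a `ℂ`-valued function. -/
def indic (p : ℕ) [Fact p.Prime] (N : ℤ) (I : ℚ_[p]) : ℚ_[p] → ℂ :=
  (pBall p N I).indicator 1

/-- `K_N`, the disjoint union of the balls around the vertices. -/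
def KN (p : ℕ) [Fact p.Prime] (N : ℤ) (V : Finset ℚ_[p]) : Set ℚ_[p] :=
  ⋃ I ∈ V, pBall p N I

/-- The kernel `A(x,y) = p^N ∑_{I,J ∈ V} A_{IJ} 1_{B_I}(x) 1_{B_J}(y)`. -/
def zker (p : ℕ) [Fact p.Prime] (N : ℤ) (V : Finset ℚ_[p]) (A : ℚ_[p] → ℚ_[p] → ℂ)
    (x y : ℚ_[p]) : ℂ :=
  (p : ℂ) ^ N * ∑ I ∈ V, ∑ J ∈ V, A I J * indic p N I x * indic p N J y

/-- The degree `γ_I = ∑_{J ∈ V} A_{IJ}`. -/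
def deg (p : ℕ) [Fact p.Prime] (V : Finset ℚ_[p]) (A : ℚ_[p] → ℚ_[p] → ℂ) (I : ℚ_[p]) : ℂ :=
  ∑ J ∈ V, A I J

/-- The degree function `γ(x) = ∑_{I ∈ V} γ_I 1_{B_I}(x)`. -/
def degFun (p : ℕ) [Fact p.Prime] (N : ℤ) (V : Finset ℚ_[p]) (A : ℚ_[p] → ℚ_[p] → ℂ)
    (x : ℚ_[p]) : ℂ :=
  ∑ I ∈ V, deg p V A I * indic p N I x

/-- The Zúñiga operator `𝒜u(x) = ∫_{K_N} A(x,y) u(y) dμ(y)`. -/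
def zop (p : ℕ) [Fact p.Prime] (N : ℤ) (V : Finset ℚ_[p]) (A : ℚ_[p] → ℚ_[p] → ℂ)
    [MeasurableSpace ℚ_[p]] (μ : Measure ℚ_[p]) (u : ℚ_[p] → ℂ) (x : ℚ_[p]) : ℂ :=
  ∫ y in KN p N V, zker p N V A x y * u y ∂μ

/-- The Zúñiga Laplacian `𝕃u = 𝒜u - γ·u`. -/
def lapOp (p : ℕ) [Fact p.Prime] (N : ℤ) (V : Finset ℚ_[p]) (A : ℚ_[p] → ℚ_[p] → ℂ)
    [MeasurableSpace ℚ_[p]] (μ : Measure ℚ_[p]) (u : ℚ_[p] → ℂ) (x : ℚ_[p]) : ℂ :=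
  zop p N V A μ u x - degFun p N V A x * u x

open scoped Classical in
/-- The kernel `L(x,y) = p^N ∑_{I,J ∈ V} (A_{IJ} - γ_I δ_{IJ}) 1_{B_I}(x) 1_{B_J}(y)`. -/
def lker (p : ℕ) [Fact p.Prime] (N : ℤ) (V : Finset ℚ_[p]) (A : ℚ_[p] → ℚ_[p] → ℂ)
    (x y : ℚ_[p]) : ℂ :=
  (p : ℂ) ^ N * ∑ I ∈ V, ∑ J ∈ V,
    (A I J - if I = J then deg p V A I else 0) * indic p N I x * indic p N J y

/-- The integral operator `ℒu(x) = ∫_{K_N} L(x,y) u(y) dμ(y)`. -/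
def lop (p : ℕ) [Fact p.Prime] (N : ℤ) (V : Finset ℚ_[p]) (A : ℚ_[p] → ℚ_[p] → ℂ)
    [MeasurableSpace ℚ_[p]] (μ : Measure ℚ_[p]) (u : ℚ_[p] → ℂ) (x : ℚ_[p]) : ℂ :=
  ∫ y in KN p N V, lker p N V A x y * u y ∂μ

/-- Pairwise disjointness of the vertex balls. -/
def BallsDisjoint (p : ℕ) [Fact p.Prime] (N : ℤ) (V : Finset ℚ_[p]) : Prop :=
  (V : Set ℚ_[p]).Pairwise fun I J => Disjoint (pBall p N I) (pBall p N J)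


section Aux
variable (p : ℕ) [hp : Fact p.Prime]


/-- residue lemma -/
lemma my_residue (z : ℚ_[p]) (h : ‖z‖ ≤ 1) :
    ∃ j < p, ‖z - (j : ℚ_[p])‖ ≤ (p : ℝ) ^ (-1 : ℤ) := by
  set z' : ℤ_[p] := ⟨z, h⟩ with hz'
  refine ⟨PadicInt.zmodRepr z', PadicInt.zmodRepr_lt_p z', ?_⟩
  have hm := PadicInt.sub_zmodRepr_mem z'
  rw [IsLocalRing.mem_maximalIdeal, PadicInt.mem_nonunits] at hm
  have : ‖z - (PadicInt.zmodRepr z' : ℚ_[p])‖ < 1 := by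
    simpa [PadicInt.norm_def] using hm
  rw [Padic.norm_le_pow_iff_norm_lt_pow_add_one]
  simpa using this

lemma my_cover (k : ℤ) :
    {x : ℚ_[p] | ‖x‖ ≤ (p : ℝ) ^ (-k)} =
      ⋃ j ∈ Finset.range p, {x : ℚ_[p] | ‖x - (j : ℚ_[p]) * (p : ℚ_[p]) ^ k‖ ≤ (p : ℝ) ^ (-(k+1))} := by
  have hp1 : (1 : ℝ) < p := by exact_mod_cast hp.out.one_lt
  have hpQ : (p : ℚ_[p]) ≠ 0 := by
    exact_mod_cast (Nat.cast_ne_zero (R := ℚ_[p])).mpr hp.out.ne_zero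
  ext x
  simp only [Set.mem_setOf_eq, Set.mem_iUnion, Finset.mem_range]
  constructor
  · intro hx
    have hz : ‖x * (p : ℚ_[p]) ^ (-k)‖ ≤ 1 := by
      rw [norm_mul, Padic.norm_p_zpow]
      calc ‖x‖ * (p:ℝ)^(-(-k)) ≤ (p:ℝ)^(-k) * (p:ℝ)^k := by
            rw [neg_neg]
            exact mul_le_mul_of_nonneg_right hx (zpow_nonneg (by positivity) _)
        _ = 1 := by
            rw [← zpow_add₀ (by positivity : (p:ℝ) ≠ 0)]; simp
    obtain ⟨j, hjp, hj⟩ := my_residue p _ hz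
    refine ⟨j, hjp, ?_⟩
    have : x - (j : ℚ_[p]) * (p:ℚ_[p])^k = (x * (p : ℚ_[p]) ^ (-k) - j) * (p:ℚ_[p])^k := by
      rw [sub_mul, mul_assoc, ← zpow_add₀ hpQ]
      simp
    rw [this, norm_mul, Padic.norm_p_zpow]
    calc ‖x * (p : ℚ_[p]) ^ (-k) - ↑j‖ * (p:ℝ)^(-k) ≤ (p:ℝ)^(-1:ℤ) * (p:ℝ)^(-k) :=
          mul_le_mul_of_nonneg_right hj (zpow_nonneg (by positivity) _)
      _ = (p:ℝ)^(-(k+1)) := by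
          rw [← zpow_add₀ (by positivity : (p:ℝ) ≠ 0)]; ring_nf
  · rintro ⟨j, hjp, hj⟩
    have h1 : ‖(j : ℚ_[p]) * (p:ℚ_[p])^k‖ ≤ (p:ℝ)^(-k) := by
      rw [norm_mul, Padic.norm_p_zpow]
      have : ‖((j:ℤ) : ℚ_[p])‖ ≤ 1 := Padic.norm_int_le_one _
      calc ‖(j:ℚ_[p])‖ * (p:ℝ)^(-k) ≤ 1 * (p:ℝ)^(-k) := by
            refine mul_le_mul_of_nonneg_right ?_ (zpow_nonneg (by positivity) _)
            exact_mod_cast this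
        _ = (p:ℝ)^(-k) := one_mul _
    have h2 : (p:ℝ)^(-(k+1)) ≤ (p:ℝ)^(-k) :=
      zpow_le_zpow_right₀ hp1.le (by omega)
    calc ‖x‖ = ‖(x - (j:ℚ_[p]) * (p:ℚ_[p])^k) + (j:ℚ_[p]) * (p:ℚ_[p])^k‖ := by ring_nf
      _ ≤ max ‖x - (j:ℚ_[p]) * (p:ℚ_[p])^k‖ ‖(j:ℚ_[p]) * (p:ℚ_[p])^k‖ := Padic.nonarchimedean _ _
      _ ≤ (p:ℝ)^(-k) := max_le (le_trans hj h2) h1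

lemma my_ball_measurable [MeasurableSpace ℚ_[p]] [BorelSpace ℚ_[p]] (ρ : ℝ) (c : ℚ_[p]) :
    MeasurableSet {x : ℚ_[p] | ‖x - c‖ ≤ ρ} := by
  have : {x : ℚ_[p] | ‖x - c‖ ≤ ρ} = Metric.closedBall c ρ := by
    ext x; simp [Metric.mem_closedBall, dist_eq_norm]
  rw [this]; exact measurableSet_closedBall

lemma my_measure_translate [MeasurableSpace ℚ_[p]] [BorelSpace ℚ_[p]]
    (μ : Measure ℚ_[p]) [μ.IsAddHaarMeasure] (c : ℚ_[p]) (ρ : ℝ) :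
    μ {x : ℚ_[p] | ‖x - c‖ ≤ ρ} = μ {x : ℚ_[p] | ‖x‖ ≤ ρ} := by
  have h1 : {x : ℚ_[p] | ‖x - c‖ ≤ ρ} = (fun x : ℚ_[p] => -c + x) ⁻¹' {x : ℚ_[p] | ‖x‖ ≤ ρ} := by
    ext x; simp [Set.mem_preimage, neg_add_eq_sub]
  rw [h1, measure_preimage_add]

lemma my_measure_ball [MeasurableSpace ℚ_[p]] [BorelSpace ℚ_[p]]
    (μ : Measure ℚ_[p]) [μ.IsAddHaarMeasure]
    (hnorm : μ {x : ℚ_[p] | ‖x‖ ≤ 1} = 1) (k : ℤ) :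
    μ {x : ℚ_[p] | ‖x‖ ≤ (p:ℝ)^(-k)} = (p:ℝ≥0∞)^(-k) := by
  have hp1 : (1 : ℝ) < p := by exact_mod_cast hp.out.one_lt
  have hp0 : (p:ℝ≥0∞) ≠ 0 := by simp [hp.out.ne_zero]
  have hpt : (p:ℝ≥0∞) ≠ ∞ := ENNReal.natCast_ne_top p
  have key : ∀ k : ℤ, μ {x : ℚ_[p] | ‖x‖ ≤ (p:ℝ)^(-k)}
      = p * μ {x : ℚ_[p] | ‖x‖ ≤ (p:ℝ)^(-(k+1))} := by
    intro k
    have hdisj : ((Finset.range p : Finset ℕ) : Set ℕ).PairwiseDisjoint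
        (fun j : ℕ => {x : ℚ_[p] | ‖x - (j : ℚ_[p]) * (p : ℚ_[p]) ^ k‖ ≤ (p : ℝ) ^ (-(k+1))}) := by
      intro i hi j hj hij
      simp only [Finset.coe_range, Set.mem_Iio] at hi hj
      refine Set.disjoint_left.mpr fun x hxi hxj => ?_
      simp only [Set.mem_setOf_eq] at hxi hxj
      have hcast : ((i:ℚ_[p]) - j) = (((i:ℤ) - (j:ℤ) : ℤ) : ℚ_[p]) := by push_cast; ring
      have hnorm1 : ‖(i:ℚ_[p]) - (j:ℚ_[p])‖ = 1 := by
        rw [hcast]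
        refine le_antisymm (Padic.norm_int_le_one _) (le_of_not_gt fun hlt => ?_)
        have hdvd := Padic.norm_intCast_lt_one_iff.mp hlt
        have h1 : p ∣ ((i:ℤ) - (j:ℤ)).natAbs := by
          have := Int.natAbs_dvd_natAbs.mpr hdvd
          simpa using this
        have h2 := Nat.le_of_dvd (by omega) h1
        omega
      have heq : ((i:ℚ_[p]) - j) * (p:ℚ_[p])^k
          = (x - (j:ℚ_[p])*(p:ℚ_[p])^k) - (x - (i:ℚ_[p])*(p:ℚ_[p])^k) := by ring
      have hd : ‖((i:ℚ_[p]) - j) * (p:ℚ_[p])^k‖ ≤ (p:ℝ)^(-(k+1)) := by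
        rw [heq, sub_eq_add_neg]
        refine le_trans (Padic.nonarchimedean _ _) (max_le hxj ?_)
        rw [norm_neg]; exact hxi
      rw [norm_mul, hnorm1, one_mul, Padic.norm_p_zpow] at hd
      have : (p:ℝ)^(-(k+1)) < (p:ℝ)^(-k) := zpow_lt_zpow_right₀ hp1 (by omega)
      linarith
    rw [my_cover p k,
      measure_biUnion_finset hdisj (fun j _ => my_ball_measurable p _ _),
      Finset.sum_congr rfl (fun j _ => my_measure_translate p μ _ _)]
    simp [Finset.sum_const, Finset.card_range, nsmul_eq_mul]
  induction k using Int.induction_on with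
  | zero => simpa using hnorm
  | succ n ih =>
      have hk := key n
      rw [ih] at hk
      have h2 : (p:ℝ≥0∞) * (p:ℝ≥0∞)^(-((n:ℤ)+1)) = (p:ℝ≥0∞)^(-(n:ℤ)) := by
        have h3 := ENNReal.zpow_add hp0 hpt 1 (-((n:ℤ)+1))
        rw [zpow_one] at h3
        rw [← h3]; congr 1; ring
      rw [← h2] at hk
      exact ((ENNReal.mul_right_inj hp0 hpt).mp hk).symm
  | pred n ih =>
      have hk := key (-(n:ℤ) - 1)
      have he : (-(n:ℤ) - 1) + 1 = -(n:ℤ) := by ring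
      rw [he, ih] at hk
      have h3 := ENNReal.zpow_add hp0 hpt 1 (-(-(n:ℤ)))
      rw [zpow_one] at h3
      rw [hk, ← h3]
      congr 1
      ring

end Aux

/-- For a simple graph (`A_{II} = 0`), `J₀ ∈ V`, `r > N` and a ball
`B' = {|x-a|_p ≤ p^{-r}} ⊆ B_{J₀}`, the indicator `f = 1_{B'}` satisfies, for every
`x₀ ∈ B_{J₀} \ B'`:  `ℒf(x₀) = -p^{N-r} γ_{J₀}` while `𝕃f(x₀) = 0`; in particular,
if `γ_{J₀} ≠ 0`, then `ℒf ≠ 𝕃f`. -/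

theorem lop_ne_lapOp (p : ℕ) [Fact p.Prime]
    [MeasurableSpace ℚ_[p]] [BorelSpace ℚ_[p]]
    (μ : Measure ℚ_[p]) [μ.IsAddHaarMeasure]
    (hnorm : μ {x : ℚ_[p] | ‖x‖ ≤ 1} = 1)
    (N : ℤ) (V : Finset ℚ_[p]) (hdisj : BallsDisjoint p N V)
    (A : ℚ_[p] → ℚ_[p] → ℂ) (hsimple : ∀ I ∈ V, A I I = 0)
    (J₀ : ℚ_[p]) (hJ₀ : J₀ ∈ V) (r : ℤ) (hr : N < r) (a : ℚ_[p])
    (hsub : pBall p r a ⊆ pBall p N J₀)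
    (f : ℚ_[p] → ℂ) (hf : f = (pBall p r a).indicator 1)
    (x₀ : ℚ_[p]) (hx₀ : x₀ ∈ pBall p N J₀ \ pBall p r a) :
    lop p N V A μ f x₀ = -(p : ℂ) ^ (N - r) * deg p V A J₀ ∧
    lapOp p N V A μ f x₀ = 0 ∧
    (deg p V A J₀ ≠ 0 → lop p N V A μ f ≠ lapOp p N V A μ f) := by
  obtain ⟨hx₀J, hx₀B⟩ := hx₀
  have hp' : Fact p.Prime := ‹_›
  have hp0C : (p:ℂ) ≠ 0 := by exact_mod_cast hp'.out.ne_zero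
  have hindic1 : ∀ (I : ℚ_[p]) (z : ℚ_[p]), z ∈ pBall p N I → indic p N I z = 1 := by
    intro I z h; simp [indic, Set.indicator_of_mem h]
  have hindic0 : ∀ (I : ℚ_[p]) (z : ℚ_[p]), z ∉ pBall p N I → indic p N I z = 0 := by
    intro I z h; simp [indic, Set.indicator_of_notMem h]
  have hx0not : ∀ I ∈ V, I ≠ J₀ → x₀ ∉ pBall p N I := by
    intro I hI hne
    exact Set.disjoint_left.mp
      (hdisj (Finset.mem_coe.mpr hJ₀) (Finset.mem_coe.mpr hI) (Ne.symm hne)) hx₀J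
  have hynot : ∀ y ∈ pBall p r a, ∀ J ∈ V, J ≠ J₀ → y ∉ pBall p N J := by
    intro y hy J hJ hne
    exact Set.disjoint_left.mp
      (hdisj (Finset.mem_coe.mpr hJ₀) (Finset.mem_coe.mpr hJ) (Ne.symm hne)) (hsub hy)
  have hsumL : ∀ y ∈ pBall p r a,
      lker p N V A x₀ y = (p:ℂ)^N * (A J₀ J₀ - deg p V A J₀) := by
    intro y hy
    rw [lker]
    congr 1
    rw [Finset.sum_eq_single_of_mem J₀ hJ₀ (fun I hI hne => Finset.sum_eq_zero fun J _ => by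
      rw [hindic0 I x₀ (hx0not I hI hne)]; ring)]
    rw [Finset.sum_eq_single_of_mem J₀ hJ₀ (fun J hJ hne => by
      rw [hindic0 J y (hynot y hy J hJ hne)]; ring)]
    rw [hindic1 J₀ x₀ hx₀J, hindic1 J₀ y (hsub hy)]
    simp
  have hsumZ : ∀ y ∈ pBall p r a,
      zker p N V A x₀ y = (p:ℂ)^N * A J₀ J₀ := by
    intro y hy
    rw [zker]
    congr 1
    rw [Finset.sum_eq_single_of_mem J₀ hJ₀ (fun I hI hne => Finset.sum_eq_zero fun J _ => by
      rw [hindic0 I x₀ (hx0not I hI hne)]; ring)]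
    rw [Finset.sum_eq_single_of_mem J₀ hJ₀ (fun J hJ hne => by
      rw [hindic0 J y (hynot y hy J hJ hne)]; ring)]
    rw [hindic1 J₀ x₀ hx₀J, hindic1 J₀ y (hsub hy)]
    ring
  have hBsub : pBall p r a ⊆ KN p N V := fun x hx => Set.mem_biUnion hJ₀ (hsub hx)
  have hBmeas : MeasurableSet (pBall p r a) := my_ball_measurable p _ _
  have hμB : μ (pBall p r a) = (p:ℝ≥0∞)^(-r) := by
    have h1 : pBall p r a = {x : ℚ_[p] | ‖x - a‖ ≤ (p:ℝ)^(-r)} := rfl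
    rw [h1, my_measure_translate p μ a _, my_measure_ball p μ hnorm r]
  have htoReal : (μ (pBall p r a)).toReal = (p:ℝ)^(-r) := by
    rw [hμB]
    have h0 : ((p:ℝ≥0) : ℝ≥0∞) = (p:ℝ≥0∞) := by simp
    rw [← h0, ← ENNReal.coe_zpow (by exact_mod_cast hp'.out.ne_zero : (p:ℝ≥0) ≠ 0),
      ENNReal.coe_toReal]
    push_cast
    ring
  have hint : ∀ c : ℂ, (∫ y in KN p N V, (pBall p r a).indicator (fun _ => c) y ∂μ)
      = ((p:ℝ)^(-r) : ℝ) • c := by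
    intro c
    rw [setIntegral_indicator hBmeas, Set.inter_eq_self_of_subset_right hBsub,
      setIntegral_const, measureReal_def, htoReal]
  have hfy1 : ∀ y ∈ pBall p r a, f y = 1 := by
    intro y hy; rw [hf, Set.indicator_of_mem hy, Pi.one_apply]
  have hfy0 : ∀ y ∉ pBall p r a, f y = 0 := by
    intro y hy; rw [hf, Set.indicator_of_notMem hy]
  have hLpt : ∀ y : ℚ_[p], lker p N V A x₀ y * f y
      = (pBall p r a).indicator (fun _ => (p:ℂ)^N * (A J₀ J₀ - deg p V A J₀)) y := by
    intro y
    by_cases hy : y ∈ pBall p r a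
    · rw [Set.indicator_of_mem hy, hfy1 y hy, mul_one, hsumL y hy]
    · rw [Set.indicator_of_notMem hy, hfy0 y hy, mul_zero]
  have hZpt : ∀ y : ℚ_[p], zker p N V A x₀ y * f y
      = (pBall p r a).indicator (fun _ => (p:ℂ)^N * A J₀ J₀) y := by
    intro y
    by_cases hy : y ∈ pBall p r a
    · rw [Set.indicator_of_mem hy, hfy1 y hy, mul_one, hsumZ y hy]
    · rw [Set.indicator_of_notMem hy, hfy0 y hy, mul_zero]
  have hz : (p:ℂ)^(-r) * (p:ℂ)^N = (p:ℂ)^(N - r) := by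
    rw [← zpow_add₀ hp0C]; congr 1; ring
  have hlop : lop p N V A μ f x₀ = -(p : ℂ) ^ (N - r) * deg p V A J₀ := by
    unfold lop
    rw [integral_congr_ae (Filter.Eventually.of_forall hLpt), hint, hsimple J₀ hJ₀]
    rw [Complex.real_smul, Complex.ofReal_zpow]
    push_cast
    rw [show ((p:ℂ)^(-r) * ((p:ℂ)^N * (0 - deg p V A J₀)))
        = -(((p:ℂ)^(-r) * (p:ℂ)^N) * deg p V A J₀) by ring, hz]
    ring
  have hlap : lapOp p N V A μ f x₀ = 0 := by
    unfold lapOp zop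
    rw [integral_congr_ae (Filter.Eventually.of_forall hZpt), hint, hsimple J₀ hJ₀,
      hfy0 x₀ hx₀B]
    simp
  refine ⟨hlop, hlap, fun hγ heq => ?_⟩
  have h := congrFun heq x₀
  rw [hlop, hlap] at h
  exact (mul_ne_zero (neg_ne_zero.mpr (zpow_ne_zero _ hp0C)) hγ) h
end
end

section
/- The Zúñiga Laplacian 𝕃 is a bounded linear operator on L²(K_N), and every u ∈ L²(K_N) that vanishes μ-almost everywhere outside a single vertex ball B_I (for some I ∈ V) and has ∫_{K_N} u dμ = 0 is an eigenfunction of 𝕃 with eigenvalue −γ_I, i.e., 𝕃u = −γ_I u. (In particular all Kozyrev wavelets supported in K_N are eigenfunctions of 𝕃.) -/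
open MeasureTheory Set
open scoped ENNReal NNReal

noncomputable section

namespace ZunigaAux

open MeasureTheory

lemma coeFn_finset_sum {α ι : Type*} {m : MeasurableSpace α} {μ : Measure α}
    (s : Finset ι) (f : ι → Lp ℂ 2 μ) (h : ι → α → ℂ)
    (hfh : ∀ i ∈ s, ⇑(f i) =ᵐ[μ] h i) :
    ⇑(∑ i ∈ s, f i) =ᵐ[μ] fun x => ∑ i ∈ s, h i x := by
  classical
  induction s using Finset.induction_on with
  | empty =>
    filter_upwards [Lp.coeFn_zero (E := ℂ) (p := 2) (μ := μ)] with x hx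
    simpa using hx
  | @insert a s ha ih =>
    rw [Finset.sum_insert ha]
    filter_upwards [Lp.coeFn_add (f a) (∑ i ∈ s, f i),
      ih (fun i hi => hfh i (Finset.mem_insert_of_mem hi)),
      hfh a (Finset.mem_insert_self a s)] with x hx1 hx2 hx3
    rw [hx1]
    simp only [Pi.add_apply, Finset.sum_insert ha, hx2, hx3]

/-- Multiplication by the indicator of a measurable set, as a bounded operator on `L²`. -/
noncomputable def mulIndL {α : Type*} {m : MeasurableSpace α} {μ : Measure α}
    (s : Set α) (hs : MeasurableSet s) : Lp ℂ 2 μ →L[ℂ] Lp ℂ 2 μ :=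
  LinearMap.mkContinuous
    { toFun := fun u => ((Lp.memLp u).indicator hs).toLp (s.indicator ⇑u)
      map_add' := fun u v => by
        rw [← MemLp.toLp_add]
        refine MemLp.toLp_congr _ _ ?_
        filter_upwards [Lp.coeFn_add u v] with x hx
        rw [Pi.add_apply]
        by_cases hxs : x ∈ s
        · rw [Set.indicator_of_mem hxs, Set.indicator_of_mem hxs,
            Set.indicator_of_mem hxs, hx, Pi.add_apply]
        · rw [Set.indicator_of_notMem hxs, Set.indicator_of_notMem hxs,
            Set.indicator_of_notMem hxs, add_zero]
      map_smul' := fun c u => by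
        simp only [RingHom.id_apply]
        rw [← MemLp.toLp_const_smul]
        refine MemLp.toLp_congr _ _ ?_
        filter_upwards [Lp.coeFn_smul c u] with x hx
        rw [Pi.smul_apply]
        by_cases hxs : x ∈ s
        · rw [Set.indicator_of_mem hxs, Set.indicator_of_mem hxs, hx, Pi.smul_apply]
        · rw [Set.indicator_of_notMem hxs, Set.indicator_of_notMem hxs, smul_zero] }
    1 (fun u => by
      simp only [LinearMap.coe_mk, AddHom.coe_mk]
      rw [Lp.norm_toLp, one_mul, Lp.norm_def]
      exact ENNReal.toReal_mono (Lp.eLpNorm_ne_top u) (eLpNorm_indicator_le _))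

lemma mulIndL_coeFn {α : Type*} {m : MeasurableSpace α} {μ : Measure α}
    (s : Set α) (hs : MeasurableSet s) (u : Lp ℂ 2 μ) :
    ⇑(mulIndL s hs u) =ᵐ[μ] s.indicator ⇑u := by
  rw [mulIndL, LinearMap.mkContinuous_apply, LinearMap.coe_mk, AddHom.coe_mk]
  exact MemLp.coeFn_toLp _

end ZunigaAux

/-- The Zúñiga Laplacian `𝕃` is a bounded linear operator on `L²(K_N)`,
and every `u ∈ L²(K_N)` vanishing `μ`-a.e. outside a single vertex ball `B_I` with
`∫_{K_N} u dμ = 0` is an eigenfunction of `𝕃` with eigenvalue `-γ_I`. -/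
theorem lapOp_bounded_and_eigenfunctions (p : ℕ) [Fact p.Prime]
    [MeasurableSpace ℚ_[p]] [BorelSpace ℚ_[p]]
    (μ : Measure ℚ_[p]) [μ.IsAddHaarMeasure]
    (hnorm : μ {x : ℚ_[p] | ‖x‖ ≤ 1} = 1)
    (N : ℤ) (V : Finset ℚ_[p]) (hdisj : BallsDisjoint p N V)
    (A : ℚ_[p] → ℚ_[p] → ℂ) :
    (∃ T : Lp ℂ 2 (μ.restrict (KN p N V)) →L[ℂ] Lp ℂ 2 (μ.restrict (KN p N V)),
      ∀ u : Lp ℂ 2 (μ.restrict (KN p N V)),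
        ⇑(T u) =ᵐ[μ.restrict (KN p N V)] lapOp p N V A μ ⇑u) ∧
    ∀ I ∈ V, ∀ u : ℚ_[p] → ℂ, MemLp u 2 (μ.restrict (KN p N V)) →
      (∀ᵐ x ∂μ, x ∉ pBall p N I → u x = 0) →
      (∫ x in KN p N V, u x ∂μ) = 0 →
      lapOp p N V A μ u =ᵐ[μ.restrict (KN p N V)] fun x => -(deg p V A I) * u x := by
  classical
  set ν := μ.restrict (KN p N V) with hν
  have hball : ∀ I : ℚ_[p], pBall p N I = Metric.closedBall I ((p : ℝ) ^ (-N)) := by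
    intro I; ext x; simp [pBall, Metric.mem_closedBall, dist_eq_norm]
  have hmeas : ∀ I : ℚ_[p], MeasurableSet (pBall p N I) := fun I => by
    rw [hball]; exact measurableSet_closedBall
  haveI hfin : IsFiniteMeasure ν := by
    constructor
    rw [Measure.restrict_apply_univ]
    calc μ (KN p N V) ≤ ∑ I ∈ V, μ (pBall p N I) := measure_biUnion_finset_le V _
      _ < ∞ := by
          refine ENNReal.sum_lt_top.mpr fun I _ => ?_
          rw [hball]
          exact (isCompact_closedBall I _).measure_lt_top
  have hmem : ∀ I : ℚ_[p], MemLp (indic p N I) 2 ν :=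
    fun I => memLp_indicator_const 2 (hmeas I) 1 (Or.inr (measure_ne_top ν _))
  have indic_mul : ∀ (J : ℚ_[p]) (u : ℚ_[p] → ℂ) (y : ℚ_[p]),
      indic p N J y * u y = (pBall p N J).indicator u y := by
    intro J u y
    by_cases h : y ∈ pBall p N J <;> simp [indic, h]
  -- the basic formula for the Zúñiga operator
  have hzop : ∀ u : ℚ_[p] → ℂ, Integrable u ν → ∀ x : ℚ_[p],
      zop p N V A μ u x = (p : ℂ) ^ N * ∑ I ∈ V, ∑ J ∈ V,
        A I J * indic p N I x * ∫ y, (pBall p N J).indicator u y ∂ν := by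
    intro u hu x
    have hint : ∀ J : ℚ_[p], Integrable (fun y => (pBall p N J).indicator u y) ν :=
      fun J => hu.indicator (hmeas J)
    have h1 : ∀ y, zker p N V A x y * u y
        = ∑ I ∈ V, ∑ J ∈ V,
            ((p : ℂ) ^ N * (A I J * indic p N I x)) * (pBall p N J).indicator u y := by
      intro y
      simp only [zker, Finset.mul_sum, Finset.sum_mul]
      refine Finset.sum_congr rfl fun I _ => Finset.sum_congr rfl fun J _ => ?_
      rw [← indic_mul]; ring
    show (∫ y, zker p N V A x y * u y ∂ν) = _
    calc (∫ y, zker p N V A x y * u y ∂ν)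
        = ∫ y, (∑ I ∈ V, ∑ J ∈ V,
            ((p : ℂ) ^ N * (A I J * indic p N I x)) * (pBall p N J).indicator u y) ∂ν := by
          exact integral_congr_ae (Filter.Eventually.of_forall h1)
      _ = ∑ I ∈ V, ∑ J ∈ V, ((p : ℂ) ^ N * (A I J * indic p N I x)) *
            ∫ y, (pBall p N J).indicator u y ∂ν := by
          rw [integral_finset_sum _
            (fun I _ => integrable_finset_sum _ (fun J _ => (hint J).const_mul _))]
          refine Finset.sum_congr rfl fun I _ => ?_
          rw [integral_finset_sum _ (fun J _ => (hint J).const_mul _)]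
          exact Finset.sum_congr rfl fun J _ => integral_const_mul _ _
      _ = (p : ℂ) ^ N * ∑ I ∈ V, ∑ J ∈ V, A I J * indic p N I x *
            ∫ y, (pBall p N J).indicator u y ∂ν := by
          rw [Finset.mul_sum]
          refine Finset.sum_congr rfl fun I _ => ?_
          rw [Finset.mul_sum]
          exact Finset.sum_congr rfl fun J _ => by ring
  have hdeg : ∀ (u : ℚ_[p] → ℂ) (x : ℚ_[p]), degFun p N V A x * u x
      = ∑ I ∈ V, deg p V A I * (pBall p N I).indicator u x := by
    intro u x
    unfold degFun
    rw [Finset.sum_mul]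
    exact Finset.sum_congr rfl fun I _ => by rw [mul_assoc, indic_mul]
  constructor
  · -- boundedness: exhibit the operator
    set g : ℚ_[p] → Lp ℂ 2 ν := fun I => (hmem I).toLp (indic p N I) with hg
    set T : Lp ℂ 2 ν →L[ℂ] Lp ℂ 2 ν :=
      (∑ I ∈ V, ∑ J ∈ V, ((p : ℂ) ^ N * A I J) • ((innerSL ℂ (g J)).smulRight (g I)))
        - ∑ I ∈ V, (deg p V A I) • (ZunigaAux.mulIndL (pBall p N I) (hmeas I)) with hT
    refine ⟨T, fun u => ?_⟩
    have huint : Integrable (⇑u) ν := (Lp.memLp u).integrable one_le_two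
    have hinner : ∀ J : ℚ_[p],
        (inner ℂ (g J) u : ℂ) = ∫ y, (pBall p N J).indicator (⇑u) y ∂ν := by
      intro J
      rw [L2.inner_def]
      refine integral_congr_ae ?_
      filter_upwards [(hmem J).coeFn_toLp] with y hy
      rw [RCLike.inner_apply, hy, ← indic_mul]
      by_cases h : y ∈ pBall p N J <;> simp [indic, h]
    have hTu : T u = (∑ I ∈ V, ∑ J ∈ V,
          ((p : ℂ) ^ N * A I J) • (((inner ℂ (g J) u : ℂ)) • g I))
        - ∑ I ∈ V, (deg p V A I) • (ZunigaAux.mulIndL (pBall p N I) (hmeas I) u) := by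
      rw [hT]
      simp only [ContinuousLinearMap.coe_sub', Pi.sub_apply, ContinuousLinearMap.coe_sum',
        Finset.sum_apply, ContinuousLinearMap.coe_smul', Pi.smul_apply,
        ContinuousLinearMap.smulRight_apply, innerSL_apply_apply]
    have hS1 : ⇑(∑ I ∈ V, ∑ J ∈ V,
          ((p : ℂ) ^ N * A I J) • (((inner ℂ (g J) u : ℂ)) • g I))
        =ᵐ[ν] fun x => ∑ I ∈ V, ∑ J ∈ V,
          ((p : ℂ) ^ N * A I J) * ((inner ℂ (g J) u : ℂ) * indic p N I x) := by
      refine ZunigaAux.coeFn_finset_sum V _ _ fun I _ => ?_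
      refine ZunigaAux.coeFn_finset_sum V _ _ fun J _ => ?_
      filter_upwards [Lp.coeFn_smul ((p : ℂ) ^ N * A I J)
          (((inner ℂ (g J) u : ℂ)) • g I),
        Lp.coeFn_smul ((inner ℂ (g J) u : ℂ)) (g I), (hmem I).coeFn_toLp] with x h1 h2 h3
      rw [h1, Pi.smul_apply, h2, Pi.smul_apply, h3, smul_eq_mul, smul_eq_mul]
    have hS2 : ⇑(∑ I ∈ V, (deg p V A I) • (ZunigaAux.mulIndL (pBall p N I) (hmeas I) u))
        =ᵐ[ν] fun x => ∑ I ∈ V, deg p V A I * (pBall p N I).indicator (⇑u) x := by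
      refine ZunigaAux.coeFn_finset_sum V _ _ fun I _ => ?_
      filter_upwards [Lp.coeFn_smul (deg p V A I)
          (ZunigaAux.mulIndL (pBall p N I) (hmeas I) u),
        ZunigaAux.mulIndL_coeFn (pBall p N I) (hmeas I) u] with x h1 h2
      rw [h1, Pi.smul_apply, h2, smul_eq_mul]
    rw [hTu]
    filter_upwards [Lp.coeFn_sub
        (∑ I ∈ V, ∑ J ∈ V, ((p : ℂ) ^ N * A I J) • (((inner ℂ (g J) u : ℂ)) • g I))
        (∑ I ∈ V, (deg p V A I) • (ZunigaAux.mulIndL (pBall p N I) (hmeas I) u)),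
      hS1, hS2] with x h1 h2 h3
    rw [h1, Pi.sub_apply, h2, h3]
    unfold lapOp
    rw [hzop (⇑u) huint x, hdeg (⇑u) x]
    congr 1
    rw [Finset.mul_sum]
    refine Finset.sum_congr rfl fun I _ => ?_
    rw [Finset.mul_sum]
    refine Finset.sum_congr rfl fun J _ => ?_
    rw [hinner J]; ring
  · -- eigenfunctions
    intro I hI u hu h0 hint0
    have huint : Integrable u ν := hu.integrable one_le_two
    have h0' : ∀ᵐ x ∂ν, x ∉ pBall p N I → u x = 0 := ae_restrict_of_ae h0
    have hzero : ∀ J ∈ V, (∫ y, (pBall p N J).indicator u y ∂ν) = 0 := by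
      intro J hJ
      by_cases hJI : J = I
      · subst hJI
        have he : (fun y => (pBall p N J).indicator u y) =ᵐ[ν] u := by
          filter_upwards [h0'] with y hy
          by_cases h : y ∈ pBall p N J
          · simp [h]
          · simp [h, hy h]
        rw [integral_congr_ae he]
        exact hint0
      · have he : (fun y => (pBall p N J).indicator u y) =ᵐ[ν] 0 := by
          filter_upwards [h0'] with y hy
          by_cases h : y ∈ pBall p N J
          · have hyI : y ∉ pBall p N I :=
              fun hyI => Set.disjoint_left.mp (hdisj hJ hI hJI) h hyI
            simp [h, hy hyI]
          · simp [h]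
        rw [integral_congr_ae he]; simp
    have hzop0 : ∀ x : ℚ_[p], zop p N V A μ u x = 0 := by
      intro x
      rw [hzop u huint x]
      rw [Finset.sum_eq_zero fun I' _ =>
        Finset.sum_eq_zero fun J hJ => by rw [hzero J hJ, mul_zero], mul_zero]
    filter_upwards [h0'] with x hx
    show lapOp p N V A μ u x = -(deg p V A I) * u x
    unfold lapOp
    rw [hzop0 x, zero_sub]
    by_cases hxI : x ∈ pBall p N I
    · have hd : degFun p N V A x = deg p V A I := by
        unfold degFun
        rw [Finset.sum_eq_single I]
        · simp [indic, hxI]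
        · intro J hJ hJI
          have hx' : x ∉ pBall p N J :=
            fun h => Set.disjoint_left.mp (hdisj hJ hI hJI) h hxI
          simp [indic, hx']
        · exact fun h => absurd hI h
      rw [hd]; ring
    · rw [hx hxI]; ring
end
end

section
/- Let S ⊆ K_N be a compact open set, let I ∈ V, and let ψ : ℚ_p → ℂ be a measurable square-integrable function that vanishes outside a ball B' ⊆ B_I ∩ S and satisfies ∫ ψ dμ = 0. Then ψ satisfies the von Neumann boundary condition: for every x ∈ K_N \ S, ∫_S A(x,y)(ψ(x) − ψ(y)) dμ(y) = 0. -/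
open MeasureTheory Set
open scoped ENNReal NNReal

noncomputable section

/-- Let `S ⊆ K_N` be compact open, `I ∈ V`, and let `ψ` be a
measurable square-integrable function vanishing outside a ball `B' ⊆ B_I ∩ S` with
`∫ ψ dμ = 0`. Then `ψ` satisfies the von Neumann boundary condition: for every
`x ∈ K_N \ S`, `∫_S A(x,y)(ψ(x) - ψ(y)) dμ(y) = 0`. -/
theorem kozyrev_satisfies_von_neumann (p : ℕ) [Fact p.Prime]
    [MeasurableSpace ℚ_[p]] [BorelSpace ℚ_[p]]
    (μ : Measure ℚ_[p]) [μ.IsAddHaarMeasure]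
    (hnorm : μ {x : ℚ_[p] | ‖x‖ ≤ 1} = 1)
    (N : ℤ) (V : Finset ℚ_[p]) (hdisj : BallsDisjoint p N V)
    (A : ℚ_[p] → ℚ_[p] → ℂ)
    (S : Set ℚ_[p]) (hSsub : S ⊆ KN p N V) (hScompact : IsCompact S) (hSopen : IsOpen S)
    (I : ℚ_[p]) (hI : I ∈ V)
    (ψ : ℚ_[p] → ℂ) (hψmeas : Measurable ψ) (hψL2 : MemLp ψ 2 μ)
    (a : ℚ_[p]) (r : ℤ) (hsub : pBall p r a ⊆ pBall p N I ∩ S)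
    (hvanish : ∀ x ∉ pBall p r a, ψ x = 0)
    (hint : ∫ x, ψ x ∂μ = 0) :
    ∀ x ∈ KN p N V \ S, ∫ y in S, zker p N V A x y * (ψ x - ψ y) ∂μ = 0 := by
  classical
  intro x hx
  have hxS : x ∉ S := hx.2
  have hψx : ψ x = 0 := hvanish x fun h => hxS (hsub h).2
  -- support facts
  have hsuppI : ∀ y, ψ y ≠ 0 → y ∈ pBall p N I := by
    intro y hy
    by_contra hnot
    exact hy (hvanish y fun h => hnot (hsub h).1)
  have hsuppS : ∀ y, y ∉ S → ψ y = 0 := by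
    intro y hy
    exact hvanish y fun h => hy (hsub h).2
  -- key: indicator kills all terms J ≠ I
  have key : ∀ J ∈ V, ∀ y, indic p N J y * ψ y = if J = I then ψ y else 0 := by
    intro J hJ y
    by_cases hy : ψ y = 0
    · simp [hy]
    · have hyI : y ∈ pBall p N I := hsuppI y hy
      by_cases hJI : J = I
      · subst hJI
        simp [indic, Set.indicator_of_mem hyI]
      · have hdis := hdisj hJ hI hJI
        have hyJ : y ∉ pBall p N J := fun hyJ =>
          (Set.disjoint_left.mp hdis hyJ) hyI
        simp [hJI, indic, Set.indicator_of_notMem hyJ]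
  have heq : ∀ y, zker p N V A x y * (ψ x - ψ y)
      = (-((p : ℂ) ^ N * ∑ I' ∈ V, A I' I * indic p N I' x)) * ψ y := by
    intro y
    rw [hψx, zero_sub, mul_neg, neg_mul, neg_inj, zker, mul_assoc, mul_assoc]
    congr 1
    rw [Finset.sum_mul, Finset.sum_mul]
    refine Finset.sum_congr rfl fun I' _ => ?_
    rw [Finset.sum_mul]
    have : ∀ J ∈ V, A I' J * indic p N I' x * indic p N J y * ψ y
        = if J = I then A I' J * indic p N I' x * ψ y else 0 := by
      intro J hJ
      rw [mul_assoc, key J hJ y]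
      by_cases h : J = I <;> simp [h]
    rw [Finset.sum_congr rfl this, Finset.sum_ite_eq' V I _]
    simp [hI]
  calc ∫ y in S, zker p N V A x y * (ψ x - ψ y) ∂μ
      = ∫ y in S, (-((p : ℂ) ^ N * ∑ I' ∈ V, A I' I * indic p N I' x)) * ψ y ∂μ := by
        simp only [heq]
    _ = (-((p : ℂ) ^ N * ∑ I' ∈ V, A I' I * indic p N I' x)) * ∫ y in S, ψ y ∂μ :=
        integral_const_mul _ _
    _ = 0 := by
        rw [setIntegral_eq_integral_of_forall_compl_eq_zero hsuppS, hint, mul_zero]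
end
end

section
/- Fix I ∈ V and let u₀ ∈ L²(K_N) vanish μ-almost everywhere outside the ball B_I with ∫_{K_N} u₀ dμ = 0. Then the curve u : [0,∞) → L²(K_N), u(t) = e^{−γ_I t} u₀, solves the heat equation associated with 𝕃: u(0) = u₀ and for every t ≥ 0 the derivative of u at t (in the L²-norm) equals 𝕃(u(t)). -/
open MeasureTheory Set
open scoped ENNReal NNReal

noncomputable section

/-- Fix `I ∈ V` and let `u₀ ∈ L²(K_N)` vanish `μ`-a.e. outside `B_I`
with `∫_{K_N} u₀ dμ = 0`. Then `u(t) = e^{-γ_I t} u₀` solves the heat equation for `𝕃`: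
`u(0) = u₀` and for every `t ≥ 0` the derivative of `u` at `t` (in the `L²`-norm)
equals `𝕃(u(t))`. -/
theorem heat_solution_on_wavelet_part (p : ℕ) [Fact p.Prime]
    [MeasurableSpace ℚ_[p]] [BorelSpace ℚ_[p]]
    (μ : Measure ℚ_[p]) [μ.IsAddHaarMeasure]
    (hnorm : μ {x : ℚ_[p] | ‖x‖ ≤ 1} = 1)
    (N : ℤ) (V : Finset ℚ_[p]) (hdisj : BallsDisjoint p N V)
    (A : ℚ_[p] → ℚ_[p] → ℂ)
    (I : ℚ_[p]) (hI : I ∈ V)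
    (u₀ : ℚ_[p] → ℂ) (hu₀ : MemLp u₀ 2 (μ.restrict (KN p N V)))
    (hvanish : ∀ᵐ x ∂μ, x ∉ pBall p N I → u₀ x = 0)
    (hint : ∫ x in KN p N V, u₀ x ∂μ = 0)
    (u : ℝ → Lp ℂ 2 (μ.restrict (KN p N V)))
    (hu : ∀ t : ℝ, u t = Complex.exp (-(deg p V A I) * (t : ℂ)) • hu₀.toLp u₀) :
    u 0 = hu₀.toLp u₀ ∧
    ∀ t : ℝ, 0 ≤ t → ∃ d : Lp ℂ 2 (μ.restrict (KN p N V)),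
      HasDerivWithinAt u d (Set.Ici 0) t ∧
      ⇑d =ᵐ[μ.restrict (KN p N V)] lapOp p N V A μ ⇑(u t) := by
  classical
  set z : ℂ := -(deg p V A I) with hz
  set v : Lp ℂ 2 (μ.restrict (KN p N V)) := hu₀.toLp u₀ with hv
  -- basic measurability
  have hballeq : ∀ J : ℚ_[p], pBall p N J = Metric.closedBall J ((p : ℝ) ^ (-N)) := by
    intro J; ext x; simp [pBall, Metric.mem_closedBall, dist_eq_norm]
  have hmeasB : ∀ J : ℚ_[p], MeasurableSet (pBall p N J) := by
    intro J; rw [hballeq]; exact measurableSet_closedBall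
  have hKmeas : MeasurableSet (KN p N V) :=
    MeasurableSet.biUnion V.countable_toSet fun J _ => hmeasB J
  have hsubK : ∀ J ∈ V, pBall p N J ⊆ KN p N V := by
    intro J hJ
    exact Set.subset_biUnion_of_mem (u := fun J => pBall p N J) hJ
  have hKfin : μ (KN p N V) < ⊤ := by
    refine lt_of_le_of_lt (measure_biUnion_finset_le V _) ?_
    refine ENNReal.sum_lt_top.2 fun J _ => ?_
    rw [hballeq]
    exact (isCompact_closedBall J _).measure_lt_top
  haveI : IsFiniteMeasure (μ.restrict (KN p N V)) :=
    ⟨by rwa [Measure.restrict_apply_univ]⟩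
  have hu₀int : Integrable u₀ (μ.restrict (KN p N V)) :=
    hu₀.integrable (by norm_num)
  -- u₀ agrees a.e. with its restriction to B_I
  have hae : u₀ =ᵐ[μ] (pBall p N I).indicator u₀ := by
    filter_upwards [hvanish] with x hx
    by_cases h : x ∈ pBall p N I
    · simp [Set.indicator_of_mem h]
    · simp [Set.indicator_of_notMem h, hx h]
  -- each ball integral vanishes
  have hJ0 : ∀ J ∈ V, ∫ y in pBall p N J, u₀ y ∂μ = 0 := by
    intro J hJ
    have step : ∫ y in pBall p N J, u₀ y ∂μ = ∫ y in pBall p N I ∩ pBall p N J, u₀ y ∂μ := by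
      rw [integral_congr_ae (ae_restrict_of_ae hae),
        integral_indicator (hmeasB I), Measure.restrict_restrict (hmeasB I)]
    by_cases hJI : J = I
    · rw [hJI] at step ⊢
      have hIK : ∫ y in KN p N V, u₀ y ∂μ = ∫ y in pBall p N I ∩ KN p N V, u₀ y ∂μ := by
        rw [integral_congr_ae (ae_restrict_of_ae hae),
          integral_indicator (hmeasB I), Measure.restrict_restrict (hmeasB I)]
      rw [step, Set.inter_self]
      have : pBall p N I ∩ KN p N V = pBall p N I := Set.inter_eq_left.2 (hsubK I hI)
      rw [← this, ← hIK]
      exact hint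
    · have hne : I ≠ J := fun h => hJI h.symm
      have hd : Disjoint (pBall p N I) (pBall p N J) := hdisj hI hJ hne
      rw [step, Set.disjoint_iff_inter_eq_empty.1 hd]
      simp
  -- indicator times u₀
  have hindic : ∀ (J : ℚ_[p]) (y : ℚ_[p]),
      (pBall p N J).indicator u₀ y = indic p N J y * u₀ y := by
    intro J y
    by_cases h : y ∈ pBall p N J
    · simp [Set.indicator_of_mem h, indic]
    · simp [Set.indicator_of_notMem h, indic]
  have hgint : ∀ J : ℚ_[p],
      Integrable ((pBall p N J).indicator u₀) (μ.restrict (KN p N V)) := fun J =>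
    hu₀int.indicator (hmeasB J)
  have hgzero : ∀ J ∈ V, ∫ y in KN p N V, (pBall p N J).indicator u₀ y ∂μ = 0 := by
    intro J hJ
    rw [integral_indicator (hmeasB J), Measure.restrict_restrict (hmeasB J),
      Set.inter_eq_left.2 (hsubK J hJ)]
    exact hJ0 J hJ
  -- the Zúñiga operator kills c • u₀
  have hzop : ∀ (c : ℂ) (x : ℚ_[p]),
      (∫ y in KN p N V, zker p N V A x y * (c * u₀ y) ∂μ) = 0 := by
    intro c x
    have hrw : ∀ y : ℚ_[p], zker p N V A x y * (c * u₀ y)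
        = ∑ I' ∈ V, ∑ J ∈ V,
            ((p : ℂ) ^ N * A I' J * indic p N I' x * c) * ((pBall p N J).indicator u₀ y) := by
      intro y
      simp only [zker, Finset.mul_sum, Finset.sum_mul]
      refine Finset.sum_congr rfl fun I' _ => Finset.sum_congr rfl fun J _ => ?_
      rw [hindic J y]; ring
    calc (∫ y in KN p N V, zker p N V A x y * (c * u₀ y) ∂μ)
        = ∫ y in KN p N V, ∑ I' ∈ V, ∑ J ∈ V,
            ((p : ℂ) ^ N * A I' J * indic p N I' x * c) * ((pBall p N J).indicator u₀ y) ∂μ := by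
          simp only [hrw]
      _ = ∑ I' ∈ V, ∫ y in KN p N V, ∑ J ∈ V,
            ((p : ℂ) ^ N * A I' J * indic p N I' x * c) * ((pBall p N J).indicator u₀ y) ∂μ :=
          integral_finset_sum V fun I' _ =>
            integrable_finset_sum V fun J _ => (hgint J).const_mul _
      _ = ∑ I' ∈ V, ∑ J ∈ V, ∫ y in KN p N V,
            ((p : ℂ) ^ N * A I' J * indic p N I' x * c) * ((pBall p N J).indicator u₀ y) ∂μ :=
          Finset.sum_congr rfl fun I' _ =>
            integral_finset_sum V fun J _ => (hgint J).const_mul _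
      _ = 0 := by
          refine Finset.sum_eq_zero fun I' _ => Finset.sum_eq_zero fun J hJ => ?_
          rw [integral_const_mul, hgzero J hJ, mul_zero]
  -- the derivative formula for the exponential curve
  have hderiv : ∀ t : ℝ,
      HasDerivAt (fun s : ℝ => Complex.exp (z * s) • v) ((z * Complex.exp (z * t)) • v) t := by
    intro t
    have h1 : HasDerivAt (fun s : ℝ => (s : ℂ)) 1 t := by
      simpa using (hasDerivAt_id t).ofReal_comp
    have h2 := ((h1.const_mul z).cexp).smul_const v
    simpa [mul_comm] using h2
  have hufun : u = fun s : ℝ => Complex.exp (z * s) • v := funext hu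
  constructor
  · rw [hu 0]; simp
  · intro t ht
    set c : ℂ := Complex.exp (z * t) with hc
    refine ⟨(z * c) • v, ?_, ?_⟩
    · rw [hufun]
      exact (hderiv t).hasDerivWithinAt
    · -- a.e. identification of the derivative with 𝕃(u t)
      have hcoe : ⇑(u t) =ᵐ[μ.restrict (KN p N V)] fun x => c * u₀ x := by
        rw [hu t]
        filter_upwards [Lp.coeFn_smul (Complex.exp (z * t)) v, hu₀.coeFn_toLp] with x h1 h2
        rw [h1, Pi.smul_apply, smul_eq_mul, ← h2, ← hv]
      have hzval : ∀ x : ℚ_[p], zop p N V A μ (⇑(u t)) x = 0 := by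
        intro x
        rw [zop]
        rw [integral_congr_ae (hcoe.mono fun y hy => by rw [hy])]
        exact hzop c x
      have hdcoe : ⇑((z * c) • v) =ᵐ[μ.restrict (KN p N V)] fun x => (z * c) * u₀ x := by
        filter_upwards [Lp.coeFn_smul (z * c) v, hu₀.coeFn_toLp] with x h1 h2
        rw [h1, Pi.smul_apply, smul_eq_mul, ← h2, ← hv]
      filter_upwards [hdcoe, hcoe, ae_restrict_of_ae hvanish] with x h1 h2 h3
      rw [h1, lapOp, hzval x, h2]
      by_cases hxB : x ∈ pBall p N I
      · have hdeg : degFun p N V A x = deg p V A I := by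
          rw [degFun]
          rw [Finset.sum_eq_single I]
          · simp [indic, Set.indicator_of_mem hxB]
          · intro J hJ hne
            have hd : Disjoint (pBall p N J) (pBall p N I) := hdisj hJ hI hne
            have : x ∉ pBall p N J := fun hx => (Set.disjoint_left.1 hd hx) hxB
            simp [indic, Set.indicator_of_notMem this]
          · intro h; exact absurd hI h
        rw [hdeg, hz]; ring
      · rw [h3 hxB]; ring
end
end

section
/- Suppose each t ↦ A_{IJ}(t) : [0,∞) → ℂ is continuous, fix I ∈ V and s ≥ 0, and let u₀ ∈ L²(K_N) vanish μ-almost everywhere outside the ball B_I with ∫_{K_N} u₀ dμ = 0. Then the curve u : [s,∞) → L²(K_N) defined by u(t) = exp(−∫_s^t γ_I(τ) dτ) · u₀ solves the non-autonomous Cauchy problem: u(s) = u₀ and for every t ≥ s the derivative of u at t (in the L²-norm) equals 𝕃(t)(u(t)). -/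
open MeasureTheory Set
open scoped ENNReal NNReal

noncomputable section

lemma sum_mul_indic (p : ℕ) [Fact p.Prime] (N : ℤ) (V : Finset ℚ_[p])
    (hdisj : BallsDisjoint p N V) {I y : ℚ_[p]} (hI : I ∈ V) (hy : y ∈ pBall p N I)
    (F : ℚ_[p] → ℂ) : ∑ J ∈ V, F J * indic p N J y = F I := by
  rw [Finset.sum_eq_single_of_mem I hI]
  · rw [indic, Set.indicator_of_mem hy, Pi.one_apply, mul_one]
  · intro J hJ hne
    have hyJ : y ∉ pBall p N J := fun h => Set.disjoint_left.mp (hdisj hJ hI hne) h hy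
    rw [indic, Set.indicator_of_notMem hyJ, mul_zero]

/-- Suppose each `t ↦ A_{IJ}(t)` is continuous on `[0,∞)`, fix `I ∈ V`
and `s ≥ 0`, and let `u₀ ∈ L²(K_N)` vanish `μ`-a.e. outside `B_I` with
`∫_{K_N} u₀ dμ = 0`. Then `u(t) = exp(-∫_s^t γ_I(τ) dτ) u₀` solves the non-autonomous
Cauchy problem: `u(s) = u₀` and for every `t ≥ s` the derivative of `u` at `t` (in the
`L²`-norm) equals `𝕃(t)(u(t))`. -/
theorem nonautonomous_heat_solution_on_wavelet_part (p : ℕ) [Fact p.Prime]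
    [MeasurableSpace ℚ_[p]] [BorelSpace ℚ_[p]]
    (μ : Measure ℚ_[p]) [μ.IsAddHaarMeasure]
    (hnorm : μ {x : ℚ_[p] | ‖x‖ ≤ 1} = 1)
    (N : ℤ) (V : Finset ℚ_[p]) (hdisj : BallsDisjoint p N V)
    (A : ℝ → ℚ_[p] → ℚ_[p] → ℂ)
    (hA : ∀ I' ∈ V, ∀ J ∈ V, ContinuousOn (fun t => A t I' J) (Set.Ici 0))
    (I : ℚ_[p]) (hI : I ∈ V) (s : ℝ) (hs : 0 ≤ s)
    (u₀ : ℚ_[p] → ℂ) (hu₀ : MemLp u₀ 2 (μ.restrict (KN p N V)))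
    (hvanish : ∀ᵐ x ∂μ, x ∉ pBall p N I → u₀ x = 0)
    (hint : ∫ x in KN p N V, u₀ x ∂μ = 0)
    (u : ℝ → Lp ℂ 2 (μ.restrict (KN p N V)))
    (hu : ∀ t : ℝ, u t = Complex.exp (-(∫ τ in s..t, deg p V (A τ) I)) • hu₀.toLp u₀) :
    u s = hu₀.toLp u₀ ∧
    ∀ t : ℝ, s ≤ t → ∃ d : Lp ℂ 2 (μ.restrict (KN p N V)),
      HasDerivWithinAt u d (Set.Ici s) t ∧
      ⇑d =ᵐ[μ.restrict (KN p N V)] lapOp p N V (A t) μ ⇑(u t) := by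
  classical
  set f : ℝ → ℂ := fun τ => deg p V (A τ) I with hf_def
  have hf_cont : ContinuousOn f (Set.Ici 0) := by
    apply continuousOn_finset_sum
    intro J hJ
    exact hA I hI J hJ
  set g : ℝ → ℂ := fun t => ∫ τ in s..t, f τ with hg_def
  set L : Lp ℂ 2 (μ.restrict (KN p N V)) := hu₀.toLp u₀ with hL_def
  constructor
  · rw [hu s, intervalIntegral.integral_same, neg_zero, Complex.exp_zero, one_smul]
  · intro t ht
    set c : ℂ := Complex.exp (-(g t)) with hc_def
    refine ⟨(c * (-(f t))) • L, ?_, ?_⟩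
    · -- derivative part
      have hIcc : Set.uIcc s t ⊆ Set.Ici (0 : ℝ) := by
        rw [Set.uIcc_of_le ht]
        exact (Set.Icc_subset_Ici_self).trans (Set.Ici_subset_Ici.mpr hs)
      have hintf : IntervalIntegrable f MeasureTheory.volume s t :=
        (hf_cont.mono hIcc).intervalIntegrable
      have hg_deriv : HasDerivWithinAt g (f t) (Set.Ici s) t := by
        rcases eq_or_lt_of_le ht with heq | hlt
        · rw [← heq]
          have hmeas : StronglyMeasurableAtFilter f (nhdsWithin s (Set.Ioi s))
              MeasureTheory.volume :=
            (hf_cont.mono ((Set.Ioi_subset_Ici le_rfl).trans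
              (Set.Ici_subset_Ici.mpr hs))).stronglyMeasurableAtFilter_nhdsWithin
              measurableSet_Ioi s
          have hb : ContinuousWithinAt f (Set.Ioi s) s :=
            (hf_cont s hs).mono ((Set.Ioi_subset_Ici le_rfl).trans
              (Set.Ici_subset_Ici.mpr hs))
          have hintf' : IntervalIntegrable f MeasureTheory.volume s s :=
            IntervalIntegrable.refl
          exact intervalIntegral.integral_hasDerivWithinAt_right hintf' hmeas hb
        · have htpos : (0 : ℝ) < t := lt_of_le_of_lt hs hlt
          have hmeas : StronglyMeasurableAtFilter f (nhds t) MeasureTheory.volume :=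
            ContinuousOn.stronglyMeasurableAtFilter isOpen_Ioi
              (hf_cont.mono Set.Ioi_subset_Ici_self) t htpos
          have hb : ContinuousAt f t :=
            hf_cont.continuousAt (Ici_mem_nhds htpos)
          exact (intervalIntegral.integral_hasDerivAt_right hintf hmeas hb).hasDerivWithinAt
      have hexp : HasDerivWithinAt (fun t => Complex.exp (-(g t)))
          (Complex.exp (-(g t)) * (-(f t))) (Set.Ici s) t := hg_deriv.neg.cexp
      have hu_eq : u = fun t => Complex.exp (-(g t)) • L := funext hu
      rw [hu_eq]
      exact hexp.smul_const L
    · -- a.e. identification of the derivative with the Laplacian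
      have h1 : ⇑(u t) =ᵐ[μ.restrict (KN p N V)] fun x => c * u₀ x := by
        rw [hu t]
        filter_upwards [Lp.coeFn_smul c L, hu₀.coeFn_toLp] with x h h'
        rw [h, Pi.smul_apply, smul_eq_mul, h']
      have hd : ⇑((c * (-(f t))) • L) =ᵐ[μ.restrict (KN p N V)]
          fun x => (c * (-(f t))) * u₀ x := by
        filter_upwards [Lp.coeFn_smul (c * (-(f t))) L, hu₀.coeFn_toLp] with x h h'
        rw [h, Pi.smul_apply, smul_eq_mul, h']
      have hv' : ∀ᵐ x ∂(μ.restrict (KN p N V)), x ∉ pBall p N I → u₀ x = 0 :=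
        ae_restrict_of_ae hvanish
      -- the Zúñiga operator vanishes on u t
      have hzop : ∀ x, zop p N V (A t) μ (⇑(u t)) x = 0 := by
        intro x
        have hcong : (fun y => zker p N V (A t) x y * (u t : ℚ_[p] → ℂ) y)
            =ᵐ[μ.restrict (KN p N V)]
            fun y => ((p : ℂ) ^ N * ∑ I' ∈ V, A t I' I * indic p N I' x) * (c * u₀ y) := by
          filter_upwards [h1, hv'] with y hy hvy
          rw [hy]
          by_cases h0 : u₀ y = 0
          · simp [h0]
          · have hyI : y ∈ pBall p N I := by
              by_contra h
              exact h0 (hvy h)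
            have hker : zker p N V (A t) x y
                = (p : ℂ) ^ N * ∑ I' ∈ V, A t I' I * indic p N I' x := by
              rw [zker]
              congr 1
              apply Finset.sum_congr rfl
              intro I' _
              exact sum_mul_indic p N V hdisj hI hyI (fun J => A t I' J * indic p N I' x)
            rw [hker]
        rw [zop, integral_congr_ae hcong]
        have : ∀ y, ((p : ℂ) ^ N * ∑ I' ∈ V, A t I' I * indic p N I' x) * (c * u₀ y)
            = (((p : ℂ) ^ N * ∑ I' ∈ V, A t I' I * indic p N I' x) * c) * u₀ y := by
          intro y; ring
        simp only [this]
        rw [MeasureTheory.integral_const_mul, hint, mul_zero]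
      -- final a.e. identity
      filter_upwards [h1, hd, hv'] with x hx hdx hvx
      rw [hdx, lapOp, hzop x, hx]
      by_cases h0 : u₀ x = 0
      · simp [h0]
      · have hxI : x ∈ pBall p N I := by
          by_contra h
          exact h0 (hvx h)
        have hdf : degFun p N V (A t) x = deg p V (A t) I :=
          sum_mul_indic p N V hdisj hI hxI (deg p V (A t))
        rw [hdf]
        have : f t = deg p V (A t) I := rfl
        rw [← this]
        ring
end
end

section
/- Suppose all entries A_{IJ}(t) are real and nonnegative and each t ↦ A_{IJ}(t) is continuous. Let u : [s,T] → C(K_N, ℝ) (continuous real-valued functions on K_N with the sup norm) be a differentiable curve with u'(t) = 𝕃(t)(u(t)) for all t ∈ [s,T], and suppose 0 ≤ u(s)(x) ≤ 1 for all x ∈ K_N. Then 0 ≤ u(t)(x) ≤ 1 for all t ∈ [s,T] and all x ∈ K_N. -/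
open MeasureTheory Set
open scoped ENNReal NNReal

noncomputable section

/-- The indicator function of `pBall p N I`, as an `ℝ`-valued function. -/
def indicR (p : ℕ) [Fact p.Prime] (N : ℤ) (I : ℚ_[p]) : ℚ_[p] → ℝ :=
  (pBall p N I).indicator 1

/-- The real kernel `A(x,y,t)` of a real matrix `A`. -/
def zkerR (p : ℕ) [Fact p.Prime] (N : ℤ) (V : Finset ℚ_[p]) (A : ℚ_[p] → ℚ_[p] → ℝ)
    (x y : ℚ_[p]) : ℝ :=
  (p : ℝ) ^ N * ∑ I ∈ V, ∑ J ∈ V, A I J * indicR p N I x * indicR p N J y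

/-- The real degree function `γ(x) = ∑_{I ∈ V} (∑_{J ∈ V} A_{IJ}) 1_{B_I}(x)`. -/
def degFunR (p : ℕ) [Fact p.Prime] (N : ℤ) (V : Finset ℚ_[p]) (A : ℚ_[p] → ℚ_[p] → ℝ)
    (x : ℚ_[p]) : ℝ :=
  ∑ I ∈ V, (∑ J ∈ V, A I J) * indicR p N I x

open scoped Classical in
/-- Extension by zero of a function on `K_N` to all of `ℚ_p`. -/
def extendZero (p : ℕ) [Fact p.Prime] (N : ℤ) (V : Finset ℚ_[p])
    (f : C(KN p N V, ℝ)) : ℚ_[p] → ℝ :=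
  fun y => if h : y ∈ KN p N V then f ⟨y, h⟩ else 0


section Aux

variable (p : ℕ) [Fact p.Prime]

lemma pBall_isClosed (N : ℤ) (I : ℚ_[p]) : IsClosed (pBall p N I) :=
  isClosed_le (by fun_prop) continuous_const

lemma pBall_isOpen (N : ℤ) (I : ℚ_[p]) : IsOpen (pBall p N I) := by
  have : pBall p N I = {x : ℚ_[p] | ‖x - I‖ < (p : ℝ) ^ (-N + 1)} := by
    ext x
    exact Padic.norm_le_pow_iff_norm_lt_pow_add_one (x - I) (-N)
  rw [this]
  exact isOpen_lt (by fun_prop) continuous_const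

lemma pBall_isClopen (N : ℤ) (I : ℚ_[p]) : IsClopen (pBall p N I) :=
  ⟨pBall_isClosed p N I, pBall_isOpen p N I⟩

lemma pBall_decomp (N : ℤ) :
    pBall p N (0 : ℚ_[p]) =
      ⋃ k ∈ Finset.range p, (fun x : ℚ_[p] => (-((k : ℚ_[p]) * (p : ℚ_[p]) ^ N)) + x) ⁻¹'
        pBall p (N + 1) (0 : ℚ_[p]) := by
  have hp0 : (0:ℝ) < p := by exact_mod_cast (Fact.out (p := p.Prime)).pos
  have hpne : (p : ℚ_[p]) ≠ 0 := by
    exact_mod_cast Nat.cast_ne_zero.2 (Fact.out (p := p.Prime)).ne_zero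
  have hone : (p : ℚ_[p]) ^ (-N) * (p:ℚ_[p])^N = 1 := by
    rw [← zpow_add₀ hpne]; simp
  ext x
  simp only [pBall, mem_setOf_eq, mem_iUnion, Finset.mem_range, mem_preimage, sub_zero,
    neg_add_eq_sub]
  constructor
  · intro hx
    have hz : ‖x * (p : ℚ_[p]) ^ (-N)‖ ≤ 1 := by
      rw [norm_mul, Padic.norm_p_zpow, neg_neg]
      calc ‖x‖ * (p:ℝ)^N ≤ (p:ℝ)^(-N) * (p:ℝ)^N := by
            apply mul_le_mul_of_nonneg_right hx (by positivity)
        _ = 1 := by rw [← zpow_add₀ (ne_of_gt hp0)]; simp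
    set z : ℤ_[p] := ⟨x * (p : ℚ_[p]) ^ (-N), hz⟩ with hzdef
    refine ⟨z.appr 1, by simpa using z.appr_lt 1, ?_⟩
    have hspec : ‖z - (z.appr 1 : ℤ_[p])‖ ≤ (p:ℝ) ^ (-(1:ℕ) : ℤ) :=
      (PadicInt.norm_le_pow_iff_mem_span_pow _ 1).2 (by simpa using z.appr_spec 1)
    have hcoe : ((z - (z.appr 1 : ℤ_[p]) : ℤ_[p]) : ℚ_[p])
        = x * (p : ℚ_[p]) ^ (-N) - (z.appr 1 : ℚ_[p]) := by
      rfl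
    have hnorm2 : ‖x * (p : ℚ_[p]) ^ (-N) - (z.appr 1 : ℚ_[p])‖ ≤ (p:ℝ)^(-(1:ℤ)) := by
      rw [← hcoe]; simpa [PadicInt.norm_def] using hspec
    have key : x - (z.appr 1 : ℚ_[p]) * (p:ℚ_[p])^N
        = (x * (p : ℚ_[p]) ^ (-N) - (z.appr 1 : ℚ_[p])) * (p:ℚ_[p])^N := by
      linear_combination (-x) * hone
    rw [key, norm_mul, Padic.norm_p_zpow]
    calc ‖x * (p : ℚ_[p]) ^ (-N) - (z.appr 1 : ℚ_[p])‖ * (p:ℝ)^(-N)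
        ≤ (p:ℝ)^(-(1:ℤ)) * (p:ℝ)^(-N) := by
          apply mul_le_mul_of_nonneg_right hnorm2 (by positivity)
      _ = (p:ℝ)^(-(N+1)) := by rw [← zpow_add₀ (ne_of_gt hp0)]; ring_nf
  · rintro ⟨k, hk, hx⟩
    have hp1 : (1:ℝ) ≤ p := by exact_mod_cast (Fact.out (p := p.Prime)).one_le
    have h1 : ‖x - (k:ℚ_[p]) * (p:ℚ_[p])^N‖ ≤ (p:ℝ)^(-N) := by
      refine hx.trans (zpow_le_zpow_right₀ hp1 (by omega))
    have h2 : ‖(k:ℚ_[p]) * (p:ℚ_[p])^N‖ ≤ (p:ℝ)^(-N) := by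
      rw [norm_mul, Padic.norm_p_zpow]
      have hk1 : ‖((k:ℤ) : ℚ_[p])‖ ≤ 1 := Padic.norm_int_le_one _
      have hk1' : ‖((k:ℕ) : ℚ_[p])‖ ≤ 1 := by push_cast at hk1 ⊢; exact hk1
      calc ‖(k:ℚ_[p])‖ * (p:ℝ)^(-N) ≤ 1 * (p:ℝ)^(-N) :=
            mul_le_mul_of_nonneg_right hk1' (by positivity)
        _ = (p:ℝ)^(-N) := one_mul _
    calc ‖x‖ = ‖(x - (k:ℚ_[p]) * (p:ℚ_[p])^N) + (k:ℚ_[p]) * (p:ℚ_[p])^N‖ := by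
          rw [sub_add_cancel]
      _ ≤ max ‖x - (k:ℚ_[p]) * (p:ℚ_[p])^N‖ ‖(k:ℚ_[p]) * (p:ℚ_[p])^N‖ :=
          Padic.nonarchimedean _ _
      _ ≤ (p:ℝ)^(-N) := max_le h1 h2

lemma pBall_decomp_disjoint (N : ℤ) :
    (↑(Finset.range p) : Set ℕ).PairwiseDisjoint
      (fun k => (fun x : ℚ_[p] => (-((k : ℚ_[p]) * (p : ℚ_[p]) ^ N)) + x) ⁻¹'
        pBall p (N + 1) (0 : ℚ_[p])) := by
  intro k hk k' hk' hne
  simp only [Finset.coe_range, mem_Iio] at hk hk'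
  rw [Function.onFun, Set.disjoint_left]
  rintro x hx hx'
  simp only [mem_preimage, pBall, mem_setOf_eq, sub_zero, neg_add_eq_sub] at hx hx'
  have hdiff : ‖((k:ℚ_[p]) - k') * (p:ℚ_[p])^N‖ ≤ (p:ℝ)^(-(N+1)) := by
    have heq : ((k:ℚ_[p]) - k') * (p:ℚ_[p])^N
        = (x - (k':ℚ_[p]) * (p:ℚ_[p])^N) + (-(x - (k:ℚ_[p]) * (p:ℚ_[p])^N)) := by ring
    rw [heq]
    refine (Padic.nonarchimedean _ _).trans (max_le hx' ?_)
    rw [norm_neg]; exact hx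
  have hp0 : (0:ℝ) < p := by exact_mod_cast (Fact.out (p := p.Prime)).pos
  rw [norm_mul, Padic.norm_p_zpow] at hdiff
  have hkk : ‖((k:ℚ_[p]) - k')‖ ≤ (p:ℝ)^(-(1:ℤ)) := by
    have h2 : (p:ℝ)^(-(N+1)) = (p:ℝ)^(-(1:ℤ)) * (p:ℝ)^(-N) := by
      rw [← zpow_add₀ (ne_of_gt hp0)]; ring_nf
    rw [h2] at hdiff
    exact le_of_mul_le_mul_right hdiff (by positivity)
  have hdvd : ((p:ℤ))^(1:ℕ) ∣ ((k:ℤ) - k') := by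
    rw [← Padic.norm_int_le_pow_iff_dvd]
    have : (((k:ℤ) - (k':ℤ) : ℤ) : ℚ_[p]) = ((k:ℚ_[p]) - k') := by push_cast; ring
    rw [this]
    simpa using hkk
  have hz : ((k:ℤ) - k') = 0 := by
    refine Int.eq_zero_of_abs_lt_dvd (by simpa using hdvd) ?_
    rw [abs_lt]; omega
  exact hne (by omega)

variable [MeasurableSpace ℚ_[p]] [BorelSpace ℚ_[p]]
  (μ : Measure ℚ_[p]) [μ.IsAddHaarMeasure]

instance : MeasurableAdd ℚ_[p] :=
  ⟨fun _ => (continuous_const.add continuous_id).measurable,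
   fun _ => (continuous_id.add continuous_const).measurable⟩

lemma pBall_measurableSet (N : ℤ) (I : ℚ_[p]) : MeasurableSet (pBall p N I) :=
  (pBall_isClosed p N I).measurableSet

lemma measure_pBall_center (N : ℤ) (I : ℚ_[p]) :
    μ (pBall p N I) = μ (pBall p N 0) := by
  have : pBall p N I = (fun x : ℚ_[p] => (-I) + x) ⁻¹' pBall p N 0 := by
    ext x; simp [pBall, neg_add_eq_sub]
  rw [this, measure_preimage_add]

lemma measure_pBall_step (N : ℤ) :
    μ (pBall p N (0:ℚ_[p])) = p * μ (pBall p (N+1) (0:ℚ_[p])) := by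
  rw [pBall_decomp p N]
  rw [measure_biUnion_finset (pBall_decomp_disjoint p N)
    (fun k _ => (pBall_measurableSet p (N+1) 0).preimage (by fun_prop))]
  have : ∀ k ∈ Finset.range p,
      μ ((fun x : ℚ_[p] => (-((k : ℚ_[p]) * (p : ℚ_[p]) ^ N)) + x) ⁻¹'
        pBall p (N + 1) (0 : ℚ_[p])) = μ (pBall p (N+1) (0:ℚ_[p])) := by
    intro k _; rw [measure_preimage_add]
  rw [Finset.sum_congr rfl this]
  simp [mul_comm]

lemma measure_pBall (hnorm : μ {x : ℚ_[p] | ‖x‖ ≤ 1} = 1) (N : ℤ) (I : ℚ_[p]) :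
    μ (pBall p N I) = (p:ℝ≥0∞) ^ (-N) := by
  have hp0 : (p:ℝ≥0∞) ≠ 0 := by exact_mod_cast (Fact.out (p := p.Prime)).ne_zero
  have hpt : (p:ℝ≥0∞) ≠ ⊤ := by simp
  have h0 : μ (pBall p 0 (0:ℚ_[p])) = 1 := by
    have : pBall p (0:ℤ) (0:ℚ_[p]) = {x : ℚ_[p] | ‖x‖ ≤ 1} := by
      ext x; simp [pBall]
    rw [this, hnorm]
  rw [measure_pBall_center]
  have hneg : ∀ m : ℕ, μ (pBall p (-(m:ℤ)) (0:ℚ_[p])) = (p:ℝ≥0∞) ^ (m:ℤ) := by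
    intro m
    induction m with
    | zero => simpa using h0
    | succ m ih =>
      have := measure_pBall_step p μ (-(m+1:ℕ))
      have h1 : (-(m+1:ℕ) : ℤ) + 1 = -(m:ℤ) := by push_cast; ring
      rw [h1] at this
      rw [this, ih, show ((m+1:ℕ):ℤ) = (m:ℤ)+1 by push_cast; ring,
        ENNReal.zpow_add hp0 hpt, zpow_one, mul_comm]
  have hpos : ∀ m : ℕ, μ (pBall p (m:ℤ) (0:ℚ_[p])) = (p:ℝ≥0∞) ^ (-(m:ℤ)) := by
    intro m
    induction m with
    | zero => simpa using h0
    | succ m ih =>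
      have hstep := measure_pBall_step p μ (m:ℤ)
      rw [ih] at hstep
      have : (p:ℝ≥0∞) * μ (pBall p ((m:ℤ)+1) 0) = (p:ℝ≥0∞) * (p:ℝ≥0∞)^(-((m:ℤ)+1)) := by
        rw [← hstep]
        have : (p:ℝ≥0∞) * (p:ℝ≥0∞)^(-((m:ℤ)+1)) = (p:ℝ≥0∞)^((1:ℤ) + -((m:ℤ)+1)) := by
          rw [ENNReal.zpow_add hp0 hpt, zpow_one]
        rw [this]
        congr 1; ring
      have := (ENNReal.mul_right_inj hp0 hpt).mp this
      rw [show ((m+1:ℕ):ℤ) = (m:ℤ)+1 by push_cast; ring, this]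
  rcases N.eq_nat_or_neg with ⟨m, rfl | rfl⟩
  · exact hpos m
  · rw [hneg m]; congr 1; ring

end Aux

section Aux2

variable (p : ℕ) [Fact p.Prime]

lemma indicR_nonneg (N : ℤ) (I : ℚ_[p]) (x : ℚ_[p]) : 0 ≤ indicR p N I x :=
  Set.indicator_nonneg (fun _ _ => zero_le_one) x

lemma indicR_continuous (N : ℤ) (I : ℚ_[p]) : Continuous (indicR p N I) := by
  apply continuous_const.indicator
  intro a ha
  rw [(pBall_isClopen p N I).frontier_eq] at ha
  exact absurd ha (notMem_empty a)

lemma KN_measurableSet [MeasurableSpace ℚ_[p]] [BorelSpace ℚ_[p]] (N : ℤ) (V : Finset ℚ_[p]) :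
    MeasurableSet (KN p N V) :=
  MeasurableSet.biUnion V.countable_toSet
    (fun I _ => (pBall_isClopen p N I).isClosed.measurableSet)

lemma zkerR_continuous_y (N : ℤ) (V : Finset ℚ_[p]) (A : ℚ_[p] → ℚ_[p] → ℝ) (x : ℚ_[p]) :
    Continuous (fun y => zkerR p N V A x y) := by
  unfold zkerR
  refine continuous_const.mul ?_
  refine continuous_finset_sum _ (fun I _ => continuous_finset_sum _ (fun J _ => ?_))
  exact continuous_const.mul (indicR_continuous p N J)

lemma zkerR_nonneg (N : ℤ) (V : Finset ℚ_[p]) (A : ℚ_[p] → ℚ_[p] → ℝ)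
    (hA : ∀ I ∈ V, ∀ J ∈ V, 0 ≤ A I J) (x y : ℚ_[p]) : 0 ≤ zkerR p N V A x y := by
  unfold zkerR
  apply mul_nonneg (by positivity)
  refine Finset.sum_nonneg (fun I hI => Finset.sum_nonneg (fun J hJ => ?_))
  exact mul_nonneg (mul_nonneg (hA I hI J hJ) (indicR_nonneg p N I x)) (indicR_nonneg p N J y)

lemma extendZero_continuousOn (N : ℤ) (V : Finset ℚ_[p]) (f : C(KN p N V, ℝ)) :
    ContinuousOn (extendZero p N V f) (KN p N V) := by
  rw [continuousOn_iff_continuous_restrict]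
  have : (KN p N V).domRestrict (extendZero p N V f) = ⇑f := by
    funext x
    simp only [domRestrict_apply, extendZero, x.2, dif_pos]
  rw [this]; exact f.continuous

variable [MeasurableSpace ℚ_[p]] [BorelSpace ℚ_[p]] (μ : Measure ℚ_[p]) [μ.IsAddHaarMeasure]

lemma integrable_ker_mul (N : ℤ) (V : Finset ℚ_[p]) [CompactSpace (KN p N V)]
    (A : ℚ_[p] → ℚ_[p] → ℝ) (x : ℚ_[p]) (f : C(KN p N V, ℝ)) :
    IntegrableOn (fun y => zkerR p N V A x y * extendZero p N V f y) (KN p N V) μ := by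
  have hcpt : IsCompact (KN p N V) := isCompact_iff_compactSpace.mpr ‹_›
  exact (((zkerR_continuous_y p N V A x).continuousOn).mul
    (extendZero_continuousOn p N V f)).integrableOn_compact hcpt

lemma integrable_ker (N : ℤ) (V : Finset ℚ_[p]) [CompactSpace (KN p N V)]
    (A : ℚ_[p] → ℚ_[p] → ℝ) (x : ℚ_[p]) :
    IntegrableOn (fun y => zkerR p N V A x y) (KN p N V) μ := by
  have hcpt : IsCompact (KN p N V) := isCompact_iff_compactSpace.mpr ‹_›
  exact ((zkerR_continuous_y p N V A x).continuousOn).integrableOn_compact hcpt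

lemma setIntegral_ker (hnorm : μ {x : ℚ_[p] | ‖x‖ ≤ 1} = 1) (N : ℤ) (V : Finset ℚ_[p])
    [CompactSpace (KN p N V)] (A : ℚ_[p] → ℚ_[p] → ℝ) (x : ℚ_[p]) :
    ∫ y in KN p N V, zkerR p N V A x y ∂μ = degFunR p N V A x := by
  have hp0 : (0:ℝ) < p := by exact_mod_cast (Fact.out (p := p.Prime)).pos
  have hcpt : IsCompact (KN p N V) := isCompact_iff_compactSpace.mpr ‹_›
  have hint : ∀ I ∈ V, ∀ J ∈ V, IntegrableOn
      (fun y => A I J * indicR p N I x * indicR p N J y) (KN p N V) μ :=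
    fun I _ J _ => (continuous_const.mul (indicR_continuous p N J)).continuousOn
      |>.integrableOn_compact hcpt
  unfold zkerR
  rw [integral_const_mul]
  rw [integral_finset_sum _ (fun I hI => integrable_finset_sum _ (fun J hJ => hint I hI J hJ))]
  have hJint : ∀ J ∈ V, ∫ y in KN p N V, indicR p N J y ∂μ = (p:ℝ)^(-N) := by
    intro J hJ
    unfold indicR
    rw [setIntegral_indicator ((pBall_isClopen p N J).isClosed.measurableSet)]
    have hsub : KN p N V ∩ pBall p N J = pBall p N J := by
      apply inter_eq_self_of_subset_right
      exact subset_biUnion_of_mem hJ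
    rw [hsub]
    simp only [Pi.one_apply]
    rw [setIntegral_const]
    rw [measureReal_def, measure_pBall p μ hnorm N J]
    rw [smul_eq_mul, mul_one]
    have hp' : ((p:ℝ≥0)) ≠ 0 := by exact_mod_cast (Fact.out (p := p.Prime)).ne_zero
    rw [show ((p:ℝ≥0∞)) = ((p:ℝ≥0):ℝ≥0∞) by simp, ← ENNReal.coe_zpow hp',
      ENNReal.coe_toReal, NNReal.coe_zpow]
    simp
  calc (p:ℝ)^N * ∑ I ∈ V, ∫ y in KN p N V, ∑ J ∈ V, A I J * indicR p N I x * indicR p N J y ∂μ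
      = (p:ℝ)^N * ∑ I ∈ V, ∑ J ∈ V, A I J * indicR p N I x * ((p:ℝ)^(-N)) := by
        congr 1
        refine Finset.sum_congr rfl (fun I hI => ?_)
        rw [integral_finset_sum _ (fun J hJ => hint I hI J hJ)]
        refine Finset.sum_congr rfl (fun J hJ => ?_)
        rw [integral_const_mul, hJint J hJ]
    _ = degFunR p N V A x := by
        unfold degFunR
        rw [Finset.mul_sum]
        refine Finset.sum_congr rfl (fun I hI => ?_)
        rw [Finset.mul_sum, Finset.sum_mul]
        refine Finset.sum_congr rfl (fun J hJ => ?_)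
        have hpp : (p:ℝ)^N * (p:ℝ)^(-N) = 1 := by
          rw [← zpow_add₀ (ne_of_gt hp0)]; simp
        linear_combination (A I J * indicR p N I x) * hpp

lemma setIntegral_ker_mul_ge (hnorm : μ {x : ℚ_[p] | ‖x‖ ≤ 1} = 1) (N : ℤ) (V : Finset ℚ_[p])
    [CompactSpace (KN p N V)] (A : ℚ_[p] → ℚ_[p] → ℝ)
    (hA : ∀ I ∈ V, ∀ J ∈ V, 0 ≤ A I J)
    (f : C(KN p N V, ℝ)) (c : ℝ) (hc : ∀ x, c ≤ f x) (x₀ : ℚ_[p]) :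
    degFunR p N V A x₀ * c ≤ ∫ y in KN p N V, zkerR p N V A x₀ y * extendZero p N V f y ∂μ := by
  have h1 : ∫ y in KN p N V, zkerR p N V A x₀ y * c ∂μ = degFunR p N V A x₀ * c := by
    rw [integral_mul_const, setIntegral_ker p μ hnorm N V A x₀]
  rw [← h1]
  refine setIntegral_mono_on ((integrable_ker p μ N V A x₀).mul_const c)
    (integrable_ker_mul p μ N V A x₀ f) (KN_measurableSet p N V) (fun y hy => ?_)
  have : extendZero p N V f y = f ⟨y, hy⟩ := dif_pos hy
  rw [this]
  exact mul_le_mul_of_nonneg_left (hc ⟨y, hy⟩) (zkerR_nonneg p N V A hA x₀ y)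

lemma exists_min {K : Type*} [TopologicalSpace K] [CompactSpace K] [Nonempty K]
    (f : C(K, ℝ)) : ∃ x₀, (⨅ x, f x) = f x₀ ∧ ∀ x, f x₀ ≤ f x := by
  obtain ⟨x₀, -, hx₀⟩ := isCompact_univ.exists_isMinOn univ_nonempty
    (f.continuous.continuousOn (s := univ))
  have hall : ∀ x, f x₀ ≤ f x := fun x => hx₀ (mem_univ x)
  have bdd : BddBelow (Set.range f) := ⟨f x₀, by rintro _ ⟨x, rfl⟩; exact hall x⟩
  exact ⟨x₀, le_antisymm (ciInf_le bdd x₀) (le_ciInf hall), hall⟩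

lemma minval_le {K : Type*} [TopologicalSpace K] [CompactSpace K] [Nonempty K]
    (f : C(K, ℝ)) (x : K) : (⨅ y, f y) ≤ f x := by
  obtain ⟨x₀, h1, h2⟩ := exists_min f
  rw [h1]; exact h2 x

lemma minval_lipschitz {K : Type*} [TopologicalSpace K] [CompactSpace K] [Nonempty K] :
    LipschitzWith 1 (fun f : C(K, ℝ) => ⨅ x, f x) := by
  apply LipschitzWith.of_dist_le_mul
  intro f g
  rw [NNReal.coe_one, one_mul, Real.dist_eq, abs_sub_le_iff]
  obtain ⟨xf, hf1, hf2⟩ := exists_min f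
  obtain ⟨xg, hg1, hg2⟩ := exists_min g
  constructor
  · rw [hf1]
    calc f xf - ⨅ x, g x ≤ f xg - g xg := by
          rw [hg1] at *; exact sub_le_sub (hf2 xg) le_rfl
      _ ≤ dist f g := by
          have := ContinuousMap.dist_apply_le_dist (f := f) (g := g) xg
          rw [Real.dist_eq] at this
          have := abs_le.mp this
          linarith [this.2]
  · rw [hg1]
    calc g xg - ⨅ x, f x ≤ g xf - f xf := by
          rw [hf1] at *; exact sub_le_sub (hg2 xf) le_rfl
      _ ≤ dist f g := by
          have := ContinuousMap.dist_apply_le_dist (f := f) (g := g) xf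
          rw [Real.dist_eq] at this
          have := abs_le.mp this
          linarith [this.1]

lemma main_nonneg (hnorm : μ {x : ℚ_[p] | ‖x‖ ≤ 1} = 1) (N : ℤ) (V : Finset ℚ_[p])
    [CompactSpace (KN p N V)]
    (A : ℝ → ℚ_[p] → ℚ_[p] → ℝ)
    (hpos : ∀ t, 0 ≤ t → ∀ I ∈ V, ∀ J ∈ V, 0 ≤ A t I J)
    (s T : ℝ) (hs : 0 ≤ s) (hsT : s ≤ T)
    (v : ℝ → C(KN p N V, ℝ))
    (hderiv : ∀ t ∈ Set.Icc s T, ∃ d : C(KN p N V, ℝ),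
      HasDerivWithinAt v d (Set.Icc s T) t ∧
      ∀ x : KN p N V, d x =
        (∫ y in KN p N V, zkerR p N V (A t) (x : ℚ_[p]) y * extendZero p N V (v t) y ∂μ)
          - degFunR p N V (A t) (x : ℚ_[p]) * v t x)
    (hinit : ∀ x : KN p N V, 0 ≤ v s x) :
    ∀ t ∈ Set.Icc s T, ∀ x : KN p N V, 0 ≤ v t x := by
  by_cases hE : IsEmpty (KN p N V)
  · exact fun t ht x => (hE.false x).elim
  haveI : Nonempty (KN p N V) := not_isEmpty_iff.mp hE
  have hvcont : ContinuousOn v (Set.Icc s T) := fun t ht =>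
    (hderiv t ht).choose_spec.1.continuousWithinAt
  set m : ℝ → ℝ := fun t => ⨅ x, v t x with hm
  have hmv : ∀ t x, m t ≤ v t x := fun t x => minval_le (v t) x
  have hmcont : ContinuousOn m (Set.Icc s T) :=
    minval_lipschitz.continuous.comp_continuousOn hvcont
  have key : ∀ ε > 0, ∀ t ∈ Set.Icc s T, -ε * (1 + (t - s)) < m t := by
    intro ε hε
    by_contra hcon
    push_neg at hcon
    set ψ : ℝ → ℝ := fun t => -ε * (1 + (t - s)) with hψ
    have hψt : ∀ t, ψ t = -ε * (1 + (t - s)) := fun _ => rfl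
    set S : Set ℝ := Set.Icc s T ∩ (fun t => m t - ψ t) ⁻¹' Set.Iic 0 with hS
    have hSne : S.Nonempty := by
      obtain ⟨t, ht, hle⟩ := hcon
      refine ⟨t, ht, ?_⟩
      simp only [Set.mem_preimage, Set.mem_Iic, hψt]
      linarith [hψt t]
    have hSclosed : IsClosed S :=
      (hmcont.sub (by fun_prop)).preimage_isClosed_of_isClosed isClosed_Icc isClosed_Iic
    have hSbdd : BddBelow S := ⟨s, fun t ht => ht.1.1⟩
    set t₀ := sInf S with ht₀
    have ht₀S : t₀ ∈ S := hSclosed.csInf_mem hSne hSbdd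
    have ht₀Icc : t₀ ∈ Set.Icc s T := ht₀S.1
    have ht₀ψ : m t₀ ≤ ψ t₀ := by
      have := ht₀S.2; simp only [Set.mem_preimage, Set.mem_Iic] at this; linarith
    have hms : 0 ≤ m s := by
      obtain ⟨x₀, h1, -⟩ := exists_min (v s)
      rw [hm]; simp only; rw [h1]; exact hinit x₀
    have hst₀ : s < t₀ := by
      rcases lt_or_eq_of_le ht₀Icc.1 with h | h
      · exact h
      · exfalso
        rw [← h] at ht₀ψ
        have : ψ s = -ε := by rw [hψ]; simp
        rw [this] at ht₀ψ
        linarith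
    have hbefore : ∀ t ∈ Set.Ico s t₀, ψ t < m t := by
      intro t ht
      by_contra hle
      push_neg at hle
      have : t ∈ S := ⟨⟨ht.1, le_trans ht.2.le ht₀Icc.2⟩, by
        simp only [Set.mem_preimage, Set.mem_Iic, hψt]; linarith [hψt t]⟩
      exact absurd (csInf_le hSbdd this) (not_le.mpr ht.2)
    obtain ⟨x₀, hx₀eq, hx₀min⟩ := exists_min (v t₀)
    obtain ⟨d, hd, hdval⟩ := hderiv t₀ ht₀Icc
    have hψd : HasDerivWithinAt ψ (-ε) (Set.Icc s T) t₀ := by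
      have h1 : HasDerivAt (fun t : ℝ => 1 + (t - s)) 1 t₀ := by
        simpa using ((hasDerivAt_id t₀).sub_const s).const_add 1
      have h2 := h1.const_mul (-ε)
      rw [mul_one] at h2
      exact h2.hasDerivWithinAt
    have hvx₀ : HasDerivWithinAt (fun t => v t x₀) (d x₀) (Set.Icc s T) t₀ := by
      have := (ContinuousMap.evalCLM (M := ℝ) ℝ x₀).hasFDerivAt.comp_hasDerivWithinAt t₀ hd
      exact this
    have hh : HasDerivWithinAt (fun t => v t x₀ - ψ t) (d x₀ + ε) (Set.Icc s T) t₀ := by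
      have := hvx₀.sub hψd
      rw [sub_neg_eq_add] at this
      exact this
    have hDle : d x₀ + ε ≤ 0 := by
      have hmono : HasDerivWithinAt (fun t => v t x₀ - ψ t) (d x₀ + ε) (Set.Icc s t₀) t₀ :=
        hh.mono (Set.Icc_subset_Icc_right ht₀Icc.2)
      rw [hasDerivWithinAt_iff_tendsto_slope] at hmono
      rw [Set.Icc_sdiff_right] at hmono
      rw [nhdsWithin_Ico_eq_nhdsLT hst₀] at hmono
      refine le_of_tendsto hmono ?_
      have hIco : Set.Ico s t₀ ∈ nhdsWithin t₀ (Set.Iio t₀) := by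
        rw [← nhdsWithin_Ico_eq_nhdsLT hst₀]
        exact self_mem_nhdsWithin
      filter_upwards [hIco] with z hz
      have hz1 : ψ z < m z := hbefore z hz
      have hnum : 0 ≤ (v z x₀ - ψ z) - (v t₀ x₀ - ψ t₀) := by
        have h1 : v t₀ x₀ - ψ t₀ ≤ 0 := by
          rw [← hx₀eq]; linarith
        have h2 : 0 ≤ v z x₀ - ψ z := by
          have := hmv z x₀; linarith
        linarith
      have hden : z - t₀ < 0 := by linarith [hz.2]
      rw [slope_def_field]
      exact div_nonpos_of_nonneg_of_nonpos hnum hden.le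
    have hd0 : 0 ≤ d x₀ := by
      rw [hdval x₀]
      have hApos : ∀ I ∈ V, ∀ J ∈ V, 0 ≤ A t₀ I J :=
        hpos t₀ (le_trans hs ht₀Icc.1)
      have hge := setIntegral_ker_mul_ge p μ hnorm N V (A t₀) hApos (v t₀) (m t₀)
        (fun x => hmv t₀ x) (x₀ : ℚ_[p])
      have : degFunR p N V (A t₀) (x₀ : ℚ_[p]) * v t₀ x₀
          = degFunR p N V (A t₀) (x₀ : ℚ_[p]) * m t₀ := by
        rw [hm]; simp only; rw [hx₀eq]
      rw [this]
      linarith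
    linarith
  intro t ht x
  by_contra hneg
  push_neg at hneg
  have hc : (0:ℝ) < 1 + (T - s) := by linarith
  set ε := (-(v t x)) / (1 + (T - s)) with hε
  have hε0 : 0 < ε := div_pos (by linarith) hc
  have := key ε hε0 t ht
  have h2 : m t ≤ v t x := hmv t x
  have h3 : -ε * (1 + (T - s)) ≤ -ε * (1 + (t - s)) := by
    apply mul_le_mul_of_nonpos_left ?_ (by linarith)
    linarith [ht.2]
  have h4 : -ε * (1 + (T - s)) = v t x := by
    rw [hε]; field_simp
  linarith

end Aux2

/-- (Maximum principle / Feller property.) Suppose the entries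
`A_{IJ}(t)` are real, nonnegative and continuous in `t`. If `u : [s,T] → C(K_N, ℝ)` is
a differentiable curve (sup norm) with `u'(t) = 𝕃(t)(u(t))` and `0 ≤ u(s) ≤ 1`
pointwise, then `0 ≤ u(t) ≤ 1` pointwise for all `t ∈ [s,T]`. -/
theorem heat_flow_preserves_unit_interval (p : ℕ) [Fact p.Prime]
    [MeasurableSpace ℚ_[p]] [BorelSpace ℚ_[p]]
    (μ : Measure ℚ_[p]) [μ.IsAddHaarMeasure]
    (hnorm : μ {x : ℚ_[p] | ‖x‖ ≤ 1} = 1)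
    (N : ℤ) (V : Finset ℚ_[p]) (hdisj : BallsDisjoint p N V)
    [CompactSpace (KN p N V)]
    (A : ℝ → ℚ_[p] → ℚ_[p] → ℝ)
    (hpos : ∀ t, 0 ≤ t → ∀ I ∈ V, ∀ J ∈ V, 0 ≤ A t I J)
    (hA : ∀ I ∈ V, ∀ J ∈ V, ContinuousOn (fun t => A t I J) (Set.Ici 0))
    (s T : ℝ) (hs : 0 ≤ s) (hsT : s ≤ T)
    (u : ℝ → C(KN p N V, ℝ))
    (hderiv : ∀ t ∈ Set.Icc s T, ∃ d : C(KN p N V, ℝ),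
      HasDerivWithinAt u d (Set.Icc s T) t ∧
      ∀ x : KN p N V, d x =
        (∫ y in KN p N V, zkerR p N V (A t) (x : ℚ_[p]) y * extendZero p N V (u t) y ∂μ)
          - degFunR p N V (A t) (x : ℚ_[p]) * u t x)
    (hinit : ∀ x : KN p N V, 0 ≤ u s x ∧ u s x ≤ 1) :
    ∀ t ∈ Set.Icc s T, ∀ x : KN p N V, 0 ≤ u t x ∧ u t x ≤ 1 := by
  have h1 : ∀ t ∈ Set.Icc s T, ∀ x : KN p N V, 0 ≤ u t x :=
    main_nonneg p μ hnorm N V A hpos s T hs hsT u hderiv (fun x => (hinit x).1)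
  set w : ℝ → C(KN p N V, ℝ) := fun t => 1 - u t with hw
  have hwa : ∀ t (x : KN p N V), w t x = 1 - u t x := by
    intro t x
    simp [hw]
  have hderivw : ∀ t ∈ Set.Icc s T, ∃ d : C(KN p N V, ℝ),
      HasDerivWithinAt w d (Set.Icc s T) t ∧
      ∀ x : KN p N V, d x =
        (∫ y in KN p N V, zkerR p N V (A t) (x : ℚ_[p]) y * extendZero p N V (w t) y ∂μ)
          - degFunR p N V (A t) (x : ℚ_[p]) * w t x := by
    intro t ht
    obtain ⟨d, hd, hdval⟩ := hderiv t ht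
    refine ⟨-d, hd.const_sub 1, fun x => ?_⟩
    have hint : ∫ y in KN p N V, zkerR p N V (A t) (x : ℚ_[p]) y * extendZero p N V (w t) y ∂μ
        = degFunR p N V (A t) (x : ℚ_[p])
          - ∫ y in KN p N V, zkerR p N V (A t) (x : ℚ_[p]) y * extendZero p N V (u t) y ∂μ := by
      have heq : Set.EqOn
          (fun y => zkerR p N V (A t) (x : ℚ_[p]) y * extendZero p N V (w t) y)
          (fun y => zkerR p N V (A t) (x : ℚ_[p]) y
            - zkerR p N V (A t) (x : ℚ_[p]) y * extendZero p N V (u t) y)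
          (KN p N V) := by
        intro y hy
        simp only
        have h1 : extendZero p N V (w t) y = w t ⟨y, hy⟩ := dif_pos hy
        have h2 : extendZero p N V (u t) y = u t ⟨y, hy⟩ := dif_pos hy
        rw [h1, h2, hwa t ⟨y, hy⟩]
        ring
      rw [setIntegral_congr_fun (KN_measurableSet p N V) heq]
      rw [integral_sub (integrable_ker p μ N V (A t) x)
        (integrable_ker_mul p μ N V (A t) x (u t))]
      rw [setIntegral_ker p μ hnorm N V (A t) x]
    rw [ContinuousMap.neg_apply, hdval x, hint, hwa t x]
    ring
  have h2 : ∀ t ∈ Set.Icc s T, ∀ x : KN p N V, 0 ≤ w t x :=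
    main_nonneg p μ hnorm N V A hpos s T hs hsT w hderivw
      (fun x => by rw [hwa s x]; linarith [(hinit x).2])
  intro t ht x
  refine ⟨h1 t ht x, ?_⟩
  have := h2 t ht x
  rw [hwa t x] at this
  linarith
end
end
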